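/- arXiv:1502.03955 — 4 statements merged into one kernel-verified Lean document; each statement's English description precedes it below -/
import Mathlib

section
/- For every 0<a<1, the sequences sup_{a/n ≤ t ≤ 1} max( t/𝕌ₙ(t), 𝕌ₙ(t)/t ) and sup_{a/n ≤ t ≤ 1} max( t/𝕍ₙ(t), 𝕍ₙ(t)/t ) are both O_p(1) as n→∞. -/
open MeasureTheory ProbabilityTheory Filter Set
open scoped Classical

/-- Empirical distribution function of the first `n` values of the sequence `u`:
`𝕌ₙ(t) = n⁻¹ #{i ≤ n : u i ≤ t}`. -/
noncomputable def ecdf (u : ℕ → ℝ) (n : ℕ) (t : ℝ) : ℝ :=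
  (((Finset.range n).filter (fun i => u i ≤ t)).card : ℝ) / n

/-- Empirical quantile function: `𝕍ₙ(t) = inf{s : 𝕌ₙ(s) ≥ t}`. -/
noncomputable def equant (u : ℕ → ℝ) (n : ℕ) (t : ℝ) : ℝ :=
  sInf {s : ℝ | t ≤ ecdf u n s}

/-- A sequence `R n` of random variables is `O_p(1)`: for every `ε > 0` there is `M > 0`
with `limsup_n P(|Rₙ| > M) < ε`. -/
def IsBigOp {Ω : Type*} [MeasurableSpace Ω] (P : Measure Ω) (R : ℕ → Ω → ℝ) : Prop :=
  ∀ ε : ℝ, 0 < ε → ∃ M : ℝ, 0 < M ∧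
    Filter.limsup (fun n => P {ω | M < |R n ω|}) atTop < ENNReal.ofReal ε

noncomputable def cnt (u : ℕ → ℝ) (n : ℕ) (s : ℝ) : ℕ :=
  ((Finset.range n).filter (fun i => u i ≤ s)).card

lemma ecdf_eq (u : ℕ → ℝ) (n : ℕ) (t : ℝ) : ecdf u n t = (cnt u n t : ℝ) / n := rfl

lemma cnt_mono (u : ℕ → ℝ) (n : ℕ) {s s' : ℝ} (h : s ≤ s') : cnt u n s ≤ cnt u n s' :=
  Finset.card_le_card (fun i hi => by
    simp only [Finset.mem_filter] at hi ⊢; exact ⟨hi.1, le_trans hi.2 h⟩)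

lemma cnt_le (u : ℕ → ℝ) (n : ℕ) (s : ℝ) : cnt u n s ≤ n := by
  simpa [cnt] using Finset.card_le_card (Finset.filter_subset (fun i => u i ≤ s) (Finset.range n))

lemma lt_of_cnt_lt_cnt {u : ℕ → ℝ} {n : ℕ} {s s' : ℝ} (h : cnt u n s < cnt u n s') : s < s' := by
  by_contra hc
  exact absurd (cnt_mono u n (not_lt.1 hc)) (by omega)

/-- Claim A: `ecdf/t ≤ M`. -/
lemma claimA {u : ℕ → ℝ} {n : ℕ} {M t : ℝ} (hn : 1 ≤ n) (hM : 1 ≤ M) (ht : 0 < t)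
    (h2 : ∀ k : ℕ, 1 ≤ k → k ≤ n → cnt u n ((k : ℝ) / (M * n)) < k) :
    ecdf u n t / t ≤ M := by
  set k := cnt u n t with hk
  rcases Nat.eq_zero_or_pos k with h0 | h1
  · rw [ecdf_eq, ← hk, h0]; simp; positivity
  · have hkn : k ≤ n := cnt_le u n t
    have hlt : (k : ℝ) / (M * n) < t := lt_of_cnt_lt_cnt (h2 k h1 hkn)
    have hn0 : (0:ℝ) < n := by positivity
    have hM0 : (0:ℝ) < M := by linarith
    rw [ecdf_eq, ← hk, div_le_iff₀ ht, div_le_iff₀ hn0]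
    rw [div_lt_iff₀ (by positivity)] at hlt
    nlinarith

/-- Claim B: `t/ecdf ≤ 2M`. -/
lemma claimB {u : ℕ → ℝ} {n : ℕ} {M t : ℝ} (hn : 1 ≤ n) (hM : 1 ≤ M) (ht : 0 < t) (ht1 : t ≤ 1)
    (h3 : ∀ k : ℕ, 1 ≤ k → (k : ℝ) * M ≤ n → k ≤ cnt u n (M * k / n)) :
    t / ecdf u n t ≤ 2 * M := by
  set k := cnt u n t with hk
  have hn0 : (0:ℝ) < n := by positivity
  have hM0 : (0:ℝ) < M := by linarith
  rcases Nat.eq_zero_or_pos k with h0 | h1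
  · rw [ecdf_eq, ← hk, h0]; simp; positivity
  · have hk0 : (0:ℝ) < k := by exact_mod_cast h1
    rw [ecdf_eq, ← hk, div_le_iff₀ (by positivity : (0:ℝ) < (k:ℝ)/n), mul_div_assoc',
      le_div_iff₀ hn0]
    by_cases hc : (n:ℝ) ≤ 2 * M * k
    · nlinarith
    · push_neg at hc
      have hk1 : (1:ℝ) ≤ (k:ℝ) := by exact_mod_cast h1
      have hkey : ((k:ℝ) + 1) * M ≤ 2 * M * k := by nlinarith
      have hkk : ((k+1 : ℕ) : ℝ) * M ≤ n := by push_cast; nlinarith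
      have hcnt : k + 1 ≤ cnt u n (M * (k+1 : ℕ) / n) := h3 (k+1) (by omega) hkk
      have hlt : t < M * ((k:ℝ)+1) / n := by
        have := lt_of_cnt_lt_cnt (show cnt u n t < cnt u n (M * ((k+1:ℕ):ℝ) / n) by omega)
        push_cast at this; exact this
      rw [lt_div_iff₀ hn0] at hlt
      nlinarith

lemma ecdf_one {u : ℕ → ℝ} {n : ℕ} (hn : 1 ≤ n) (h1 : ∀ i < n, u i ∈ Set.Ioo (0:ℝ) 1) :
    ecdf u n 1 = 1 := by
  have : (Finset.range n).filter (fun i => u i ≤ 1) = Finset.range n := by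
    apply Finset.filter_true_of_mem
    intro i hi
    exact le_of_lt (h1 i (Finset.mem_range.1 hi)).2
  rw [ecdf_eq, cnt, this]
  field_simp
  simp

lemma equant_bddBelow {u : ℕ → ℝ} {n : ℕ} {t : ℝ} (ht : 0 < t)
    (h1 : ∀ i < n, u i ∈ Set.Ioo (0:ℝ) 1) :
    BddBelow {s : ℝ | t ≤ ecdf u n s} := by
  refine ⟨0, fun s hs => ?_⟩
  by_contra hc
  push_neg at hc
  have : cnt u n s = 0 := by
    rw [cnt, Finset.card_eq_zero, Finset.filter_eq_empty_iff]
    intro i hi hle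
    exact absurd (lt_of_le_of_lt hle hc) (not_lt.2 (le_of_lt (h1 i (Finset.mem_range.1 hi)).1))
  rw [Set.mem_setOf_eq, ecdf_eq, this, Nat.cast_zero, zero_div] at hs
  linarith

lemma equant_mem {u : ℕ → ℝ} {n : ℕ} {t : ℝ} (hn : 1 ≤ n) (ht : 0 < t) (ht1 : t ≤ 1)
    (h1 : ∀ i < n, u i ∈ Set.Ioo (0:ℝ) 1) :
    t ≤ ecdf u n (equant u n t) := by
  set S := {s : ℝ | t ≤ ecdf u n s} with hS
  have h1S : (1:ℝ) ∈ S := by rw [hS, Set.mem_setOf_eq, ecdf_one hn h1]; exact ht1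
  have hne : S.Nonempty := ⟨1, h1S⟩
  have hbd : BddBelow S := equant_bddBelow ht h1
  set Q := equant u n t with hQ
  set T := (Finset.range n).filter (fun i => Q < u i) with hT
  by_cases hTne : T.Nonempty
  · set m := T.inf' hTne u with hm
    have hQm : Q < m := by
      rw [hm, Finset.lt_inf'_iff]
      intro i hi
      exact (Finset.mem_filter.1 hi).2
    obtain ⟨s, hsS, hsm⟩ := exists_lt_of_csInf_lt hne hQm
    have hQs : Q ≤ s := csInf_le hbd hsS
    have hfe : cnt u n s = cnt u n Q := by
      rw [cnt, cnt]
      congr 1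
      apply Finset.filter_congr
      intro i hi
      constructor
      · intro hus
        by_contra hqu
        push_neg at hqu
        have hiT : i ∈ T := Finset.mem_filter.2 ⟨hi, hqu⟩
        exact absurd (Finset.inf'_le u hiT) (not_le.2 (lt_of_le_of_lt hus hsm))
      · intro h; exact le_trans h hQs
    have : t ≤ ecdf u n s := hsS
    rwa [ecdf_eq, hfe, ← ecdf_eq] at this
  · have : cnt u n Q = n := by
      rw [cnt]
      rw [Finset.filter_true_of_mem]
      · exact Finset.card_range n
      · intro i hi
        by_contra hc
        exact hTne ⟨i, Finset.mem_filter.2 ⟨hi, not_le.1 hc⟩⟩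
    rw [ecdf_eq, this]
    rw [div_self (by positivity : ((n:ℝ)) ≠ 0)]
    exact ht1

lemma equant_le_one {u : ℕ → ℝ} {n : ℕ} {t : ℝ} (hn : 1 ≤ n) (ht1 : t ≤ 1) (ht : 0 < t)
    (h1 : ∀ i < n, u i ∈ Set.Ioo (0:ℝ) 1) : equant u n t ≤ 1 := by
  apply csInf_le (equant_bddBelow ht h1)
  rw [Set.mem_setOf_eq, ecdf_one hn h1]; exact ht1

/-- Claim C1 : `t / equant ≤ M`. -/
lemma claimC1 {u : ℕ → ℝ} {n : ℕ} {M t : ℝ} (hn : 1 ≤ n) (hM : 1 ≤ M) (ht : 0 < t) (ht1 : t ≤ 1)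
    (h1 : ∀ i < n, u i ∈ Set.Ioo (0:ℝ) 1)
    (h2 : ∀ k : ℕ, 1 ≤ k → k ≤ n → cnt u n ((k : ℝ) / (M * n)) < k) :
    t / equant u n t ≤ M := by
  have hn0 : (0:ℝ) < n := by positivity
  have hM0 : (0:ℝ) < M := by linarith
  set Q := equant u n t with hQ
  have hmem : t ≤ ecdf u n Q := equant_mem hn ht ht1 h1
  set k := cnt u n Q with hk
  have hk1 : 1 ≤ k := by
    by_contra hc
    have : k = 0 := by omega
    rw [ecdf_eq, ← hk, this, Nat.cast_zero, zero_div] at hmem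
    linarith
  have hkn : k ≤ n := cnt_le u n Q
  have hlt : (k : ℝ) / (M * n) < Q := lt_of_cnt_lt_cnt (h2 k hk1 hkn)
  have hQpos : 0 < Q := lt_trans (by positivity) hlt
  rw [div_le_iff₀ hQpos]
  have htk : t ≤ (k : ℝ) / n := by rw [ecdf_eq, ← hk] at hmem; exact hmem
  rw [div_lt_iff₀ (by positivity)] at hlt
  rw [le_div_iff₀ hn0] at htk
  nlinarith

/-- Claim C2 : `equant / t ≤ 2M(1+1/a)`. -/
lemma claimC2 {u : ℕ → ℝ} {n : ℕ} {M t a : ℝ} (hn : 1 ≤ n) (hM : 1 ≤ M)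
    (ha0 : 0 < a) (hta : a / n ≤ t) (ht1 : t ≤ 1)
    (h1 : ∀ i < n, u i ∈ Set.Ioo (0:ℝ) 1)
    (h3 : ∀ k : ℕ, 1 ≤ k → (k : ℝ) * M ≤ n → k ≤ cnt u n (M * k / n)) :
    equant u n t / t ≤ 2 * M * (1 + 1 / a) := by
  have hn0 : (0:ℝ) < n := by positivity
  have hM0 : (0:ℝ) < M := by linarith
  have ht : 0 < t := lt_of_lt_of_le (by positivity) hta
  set Q := equant u n t with hQ
  have hQ1 : Q ≤ 1 := equant_le_one hn ht1 ht h1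
  have ha1 : 0 < 1 + 1/a := by positivity
  set m := ⌈(n:ℝ) * t⌉₊ with hm
  have hnt0 : 0 < (n:ℝ) * t := by positivity
  have hm1 : 1 ≤ m := Nat.one_le_iff_ne_zero.2 (by
    simp only [hm, ne_eq, Nat.ceil_eq_zero, not_le]; exact hnt0)
  have hmlt : (m : ℝ) < (n:ℝ) * t + 1 := Nat.ceil_lt_add_one (le_of_lt hnt0)
  have hmge : (n:ℝ) * t ≤ m := Nat.le_ceil _
  have h1n : 1 / (n:ℝ) ≤ t / a := by
    rw [div_le_div_iff₀ hn0 ha0]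
    calc 1 * a = a := one_mul a
    _ ≤ t * n := by rw [div_le_iff₀ hn0] at hta; linarith
  by_cases hc : (m : ℝ) * M ≤ n
  · have hcnt : m ≤ cnt u n (M * m / n) := h3 m hm1 hc
    have hS : M * m / n ∈ {s : ℝ | t ≤ ecdf u n s} := by
      rw [Set.mem_setOf_eq, ecdf_eq]
      calc t = (n * t) / n := by field_simp
      _ ≤ (m : ℝ) / n := by gcongr
      _ ≤ (cnt u n (M * m / n) : ℝ) / n := by gcongr <;> exact_mod_cast hcnt
    have hQle : Q ≤ M * m / n := csInf_le (equant_bddBelow ht h1) hS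
    have hQle2 : Q ≤ M * t * (1 + 1/a) := by
      have h5 : M * (m:ℝ) / n ≤ M * ((n:ℝ) * t + 1) / n := by gcongr <;> linarith
      have h6 : M * ((n:ℝ) * t + 1) / n = M * t + M * (1/n) := by field_simp
      have h7 : M * (1/(n:ℝ)) ≤ M * (t/a) := by gcongr
      have h8 : M * t * (1 + 1/a) = M * t + M * (t/a) := by ring
      linarith
    rw [div_le_iff₀ ht]
    have h9 : M * t * (1 + 1/a) ≤ 2 * M * (1 + 1/a) * t := by
      nlinarith [mul_pos (mul_pos hM0 ht) ha1]
    linarith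
  · push_neg at hc
    rcases eq_or_lt_of_le hm1 with hm2 | hm2
    · -- m = 1, so n < M : use Q/t ≤ 1/t ≤ n/a < M/a
      have hnM : (n:ℝ) < M := by rw [← hm2] at hc; push_cast at hc; linarith
      rw [div_le_iff₀ ht]
      have hta' : a ≤ t * n := by rw [div_le_iff₀ hn0] at hta; linarith
      have k1 : 1 < M * t / a := by rw [lt_div_iff₀ ha0]; nlinarith
      have e1 : M * t / a = M * t * (1/a) := by ring
      have e2 : 2 * M * (1 + 1/a) * t = 2 * (M * t) + 2 * (M * t * (1/a)) := by ring
      have p1 : 0 < M * t := by positivity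
      have p2 : 0 < M * t * (1/a) := by positivity
      linarith
    · -- m ≥ 2 : t > (m-1)/n ≥ m/(2n) > 1/(2M)
      have hm2' : (2:ℝ) ≤ m := by exact_mod_cast hm2
      have htl : 1 / (2*M) < t := by
        have h1 : (m:ℝ) - 1 < n * t := by linarith
        have h2 : (m:ℝ) / 2 ≤ (m:ℝ) - 1 := by linarith
        have h3 : (n:ℝ) / M < m := by rw [div_lt_iff₀ hM0]; linarith
        rw [div_lt_iff₀ (by positivity)]
        nlinarith
      rw [div_le_iff₀ ht]
      rw [div_lt_iff₀ (by positivity : (0:ℝ) < 2*M)] at htl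
      have e2 : 2 * M * (1 + 1/a) * t = t * (2*M) + 2 * M * t * (1/a) := by ring
      have p2 : 0 < 2 * M * t * (1/a) := by positivity
      linarith

lemma mem_S_nonneg {u : ℕ → ℝ} {n : ℕ} {t s : ℝ} (ht : 0 < t)
    (h1 : ∀ i < n, u i ∈ Set.Ioo (0:ℝ) 1) (hs : t ≤ ecdf u n s) : 0 ≤ s := by
  by_contra hc
  push_neg at hc
  have : cnt u n s = 0 := by
    rw [cnt, Finset.card_eq_zero, Finset.filter_eq_empty_iff]
    intro i hi hle
    exact absurd (lt_of_le_of_lt hle hc) (not_lt.2 (le_of_lt (h1 i (Finset.mem_range.1 hi)).1))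
  rw [ecdf_eq, this, Nat.cast_zero, zero_div] at hs
  linarith

lemma equant_nonneg {u : ℕ → ℝ} {n : ℕ} {t : ℝ} (ht : 0 < t)
    (h1 : ∀ i < n, u i ∈ Set.Ioo (0:ℝ) 1) : 0 ≤ equant u n t :=
  Real.sInf_nonneg (fun _ hs => mem_S_nonneg ht h1 hs)

lemma det_bound {u : ℕ → ℝ} {n : ℕ} {M a : ℝ} (hn : 1 ≤ n) (hM : 1 ≤ M) (ha0 : 0 < a)
    (ha1 : a < 1)
    (h1 : ∀ i < n, u i ∈ Set.Ioo (0:ℝ) 1)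
    (h2 : ∀ k : ℕ, 1 ≤ k → k ≤ n → cnt u n ((k : ℝ) / (M * n)) < k)
    (h3 : ∀ k : ℕ, 1 ≤ k → (k : ℝ) * M ≤ n → k ≤ cnt u n (M * k / n)) :
    |⨆ t : Set.Icc (a / (n : ℝ)) 1, max ((t : ℝ) / ecdf u n t) (ecdf u n t / (t : ℝ))|
        ≤ 2*M*(1+1/a) ∧
    |⨆ t : Set.Icc (a / (n : ℝ)) 1, max ((t : ℝ) / equant u n t) (equant u n t / (t : ℝ))|
        ≤ 2*M*(1+1/a) := by
  have hn0 : (0:ℝ) < n := by positivity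
  have hM0 : (0:ℝ) < M := by linarith
  have ha1' : (0:ℝ) < 1 + 1/a := by positivity
  have hK0 : (0:ℝ) < 2*M*(1+1/a) := by positivity
  have hKM : 2*M ≤ 2*M*(1+1/a) := by nlinarith [mul_pos hM0 (one_div_pos.mpr ha0)]
  have h1mem : (1:ℝ) ∈ Set.Icc (a / (n:ℝ)) 1 := by
    constructor
    · rw [div_le_one hn0]
      calc a ≤ 1 := le_of_lt ha1
      _ ≤ (n:ℝ) := by exact_mod_cast hn
    · exact le_refl 1
  haveI : Nonempty (Set.Icc (a / (n:ℝ)) 1) := ⟨⟨1, h1mem⟩⟩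
  have htpos : ∀ t : Set.Icc (a / (n:ℝ)) 1, 0 < (t:ℝ) := by
    rintro ⟨t, ht, -⟩
    exact lt_of_lt_of_le (by positivity) ht
  constructor
  · have hub : ∀ t : Set.Icc (a / (n:ℝ)) 1,
        max ((t : ℝ) / ecdf u n t) (ecdf u n t / (t : ℝ)) ≤ 2*M*(1+1/a) := by
      rintro ⟨t, ht0, ht1⟩
      have htp : 0 < t := lt_of_lt_of_le (by positivity) ht0
      apply max_le
      · exact le_trans (claimB hn hM htp ht1 h3) hKM
      · refine le_trans (claimA hn hM htp h2) (by nlinarith [mul_pos hM0 (one_div_pos.mpr ha0)])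
    have hup : (⨆ t : Set.Icc (a / (n:ℝ)) 1,
        max ((t : ℝ) / ecdf u n t) (ecdf u n t / (t : ℝ))) ≤ 2*M*(1+1/a) := ciSup_le hub
    have hlo : (0:ℝ) ≤ ⨆ t : Set.Icc (a / (n:ℝ)) 1,
        max ((t : ℝ) / ecdf u n t) (ecdf u n t / (t : ℝ)) := by
      refine le_trans ?_ (le_ciSup ⟨2*M*(1+1/a), Set.forall_mem_range.2 hub⟩ (⟨1, h1mem⟩ :
        Set.Icc (a / (n:ℝ)) 1))
      apply le_max_of_le_right
      have : (0:ℝ) ≤ ecdf u n 1 := by rw [ecdf_eq]; positivity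
      simpa using this
    rw [abs_le]; exact ⟨by linarith, hup⟩
  · have hub : ∀ t : Set.Icc (a / (n:ℝ)) 1,
        max ((t : ℝ) / equant u n t) (equant u n t / (t : ℝ)) ≤ 2*M*(1+1/a) := by
      rintro ⟨t, ht0, ht1⟩
      have htp : 0 < t := lt_of_lt_of_le (by positivity) ht0
      apply max_le
      · exact le_trans (claimC1 hn hM htp ht1 h1 h2) (by nlinarith [mul_pos hM0 (one_div_pos.mpr ha0)])
      · exact claimC2 hn hM ha0 ht0 ht1 h1 h3
    have hup : (⨆ t : Set.Icc (a / (n:ℝ)) 1,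
        max ((t : ℝ) / equant u n t) (equant u n t / (t : ℝ))) ≤ 2*M*(1+1/a) := ciSup_le hub
    have hlo : (0:ℝ) ≤ ⨆ t : Set.Icc (a / (n:ℝ)) 1,
        max ((t : ℝ) / equant u n t) (equant u n t / (t : ℝ)) := by
      refine le_trans ?_ (le_ciSup ⟨2*M*(1+1/a), Set.forall_mem_range.2 hub⟩ (⟨1, h1mem⟩ :
        Set.Icc (a / (n:ℝ)) 1))
      apply le_max_of_le_right
      have h0q : (0:ℝ) ≤ equant u n 1 := equant_nonneg one_pos h1
      positivity
    rw [abs_le]; exact ⟨by linarith, hup⟩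

section prob
variable {Ω : Type*} [MeasurableSpace Ω] (P : Measure Ω) [IsProbabilityMeasure P]
  (U : ℕ → Ω → ℝ)

lemma cnt_eq_sum (u : ℕ → ℝ) (n : ℕ) (s : ℝ) :
    ((cnt u n s : ℝ)) = ∑ i ∈ Finset.range n, (fun x => if x ≤ s then (1:ℝ) else 0) (u i) := by
  rw [cnt, Finset.card_filter]
  push_cast
  simp

lemma measure_Iic_unif (hUmeas : ∀ i, Measurable (U i))
    (hUunif : ∀ i, P.map (U i) = volume.restrict (Set.Ioo 0 1))
    (i : ℕ) {s : ℝ} (h0 : 0 ≤ s) (h1 : s ≤ 1) :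
    P (U i ⁻¹' Set.Iic s) = ENNReal.ofReal s := by
  rw [← Measure.map_apply (hUmeas i) measurableSet_Iic, hUunif i,
    Measure.restrict_apply measurableSet_Iic]
  apply le_antisymm
  · calc volume (Set.Iic s ∩ Set.Ioo 0 1) ≤ volume (Set.Ioc 0 s) := by
          apply measure_mono
          rintro x ⟨hx1, hx2, hx3⟩
          exact ⟨hx2, hx1⟩
    _ = ENNReal.ofReal s := by rw [Real.volume_Ioc]; simp
  · calc ENNReal.ofReal s = volume (Set.Ioo 0 s) := by rw [Real.volume_Ioo]; simp
    _ ≤ volume (Set.Iic s ∩ Set.Ioo 0 1) := by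
          apply measure_mono
          rintro x ⟨hx1, hx2⟩
          exact ⟨le_of_lt hx2, hx1, lt_of_lt_of_le hx2 h1⟩

lemma mgf_indicator (hUmeas : ∀ i, Measurable (U i))
    (hUunif : ∀ i, P.map (U i) = volume.restrict (Set.Ioo 0 1))
    (i : ℕ) {s : ℝ} (h0 : 0 ≤ s) (h1 : s ≤ 1) (t : ℝ) :
    mgf ((fun x => if x ≤ s then (1:ℝ) else 0) ∘ U i) P t = 1 + s * (Real.exp t - 1) := by
  have hA : MeasurableSet (U i ⁻¹' Set.Iic s) := (hUmeas i) measurableSet_Iic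
  have hfe : (fun ω => Real.exp (t * ((fun x => if x ≤ s then (1:ℝ) else 0) ∘ U i) ω))
      = fun ω => (U i ⁻¹' Set.Iic s).indicator (fun _ => Real.exp t - 1) ω + 1 := by
    funext ω
    by_cases h : U i ω ≤ s
    · simp [Function.comp, h, Set.indicator_of_mem (show ω ∈ U i ⁻¹' Set.Iic s from h)]
    · simp [Function.comp, h, Set.indicator_of_notMem (show ω ∉ U i ⁻¹' Set.Iic s from h)]
  rw [mgf, hfe, integral_add ((integrable_const (Real.exp t - 1)).indicator hA)
    (integrable_const 1), integral_indicator_const _ hA, integral_const]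
  rw [measureReal_def, measure_Iic_unif P U hUmeas hUunif i h0 h1]
  simp [ENNReal.toReal_ofReal h0]
  ring

lemma Xmeas (hUmeas : ∀ i, Measurable (U i)) (s : ℝ) (i : ℕ) :
    Measurable ((fun x => if x ≤ s then (1:ℝ) else 0) ∘ U i) :=
  (Measurable.ite measurableSet_Iic measurable_const measurable_const).comp (hUmeas i)

lemma mgf_count (hUmeas : ∀ i, Measurable (U i))
    (hUindep : iIndepFun U P)
    (hUunif : ∀ i, P.map (U i) = volume.restrict (Set.Ioo 0 1))
    (n : ℕ) {s : ℝ} (h0 : 0 ≤ s) (h1 : s ≤ 1) (t : ℝ) :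
    mgf (∑ i ∈ Finset.range n, (fun x => if x ≤ s then (1:ℝ) else 0) ∘ U i) P t
      = (1 + s * (Real.exp t - 1))^n := by
  rw [iIndepFun.mgf_sum (hUindep.comp _ (fun i =>
      (Measurable.ite measurableSet_Iic measurable_const measurable_const)))
      (Xmeas U hUmeas s) (Finset.range n)]
  rw [Finset.prod_congr rfl (fun i _ => mgf_indicator P U hUmeas hUunif i h0 h1 t),
    Finset.prod_const, Finset.card_range]

lemma int_exp_count (hUmeas : ∀ i, Measurable (U i)) (n : ℕ) (s t : ℝ) :
    Integrable (fun ω => Real.exp (t *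
      (∑ i ∈ Finset.range n, (fun x => if x ≤ s then (1:ℝ) else 0) ∘ U i) ω)) P := by
  set X := fun i => (fun x => if x ≤ s then (1:ℝ) else 0) ∘ U i with hX
  have hmeas : Measurable fun ω => Real.exp (t * (∑ i ∈ Finset.range n, X i) ω) := by
    apply Measurable.exp
    apply Measurable.const_mul
    have := Finset.measurable_sum (Finset.range n) (fun i _ => Xmeas U hUmeas s i)
    convert this using 1
    funext ω
    rw [Finset.sum_apply]
  refine Integrable.mono' (integrable_const (Real.exp (|t| * n))) hmeas.aestronglyMeasurable
    (ae_of_all _ (fun ω => ?_))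
  rw [Real.norm_eq_abs, Real.abs_exp, Real.exp_le_exp]
  have hb : (∑ i ∈ Finset.range n, X i) ω ∈ Set.Icc (0:ℝ) n := by
    rw [Finset.sum_apply]
    constructor
    · apply Finset.sum_nonneg; intro i _
      simp only [hX, Function.comp]
      split <;> norm_num
    · calc ∑ i ∈ Finset.range n, X i ω ≤ ∑ i ∈ Finset.range n, 1 := by
            apply Finset.sum_le_sum; intro i _
            simp only [hX, Function.comp]
            split <;> norm_num
      _ = n := by simp
  calc t * (∑ i ∈ Finset.range n, X i) ω ≤ |t * (∑ i ∈ Finset.range n, X i) ω| := le_abs_self _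
  _ = |t| * |(∑ i ∈ Finset.range n, X i) ω| := abs_mul _ _
  _ ≤ |t| * n := by
      apply mul_le_mul_of_nonneg_left _ (abs_nonneg t)
      rw [abs_of_nonneg hb.1]; exact hb.2

lemma count_chernoff_ge (hUmeas : ∀ i, Measurable (U i))
    (hUindep : iIndepFun U P)
    (hUunif : ∀ i, P.map (U i) = volume.restrict (Set.Ioo 0 1))
    (n : ℕ) {s : ℝ} (h0 : 0 ≤ s) (h1 : s ≤ 1) {t : ℝ} (ht : 0 ≤ t) (ε : ℝ) :
    P {ω | ε ≤ (cnt (fun i => U i ω) n s : ℝ)}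
      ≤ ENNReal.ofReal (Real.exp (-t*ε) * (1 + s*(Real.exp t - 1))^n) := by
  set X := fun i => (fun x => if x ≤ s then (1:ℝ) else 0) ∘ U i with hX
  have hev : {ω | ε ≤ (cnt (fun i => U i ω) n s : ℝ)}
      = {ω | ε ≤ (∑ i ∈ Finset.range n, X i) ω} := by
    ext ω
    rw [Set.mem_setOf_eq, Set.mem_setOf_eq, cnt_eq_sum, Finset.sum_apply]
    rfl
  have hch := measure_ge_le_exp_mul_mgf (μ := P) (X := ∑ i ∈ Finset.range n, X i) ε ht
    (int_exp_count P U hUmeas n s t)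
  rw [mgf_count P U hUmeas hUindep hUunif n h0 h1 t] at hch
  rw [hev]
  rw [← ENNReal.ofReal_toReal (measure_ne_top P _)]
  exact ENNReal.ofReal_le_ofReal hch

lemma count_chernoff_le (hUmeas : ∀ i, Measurable (U i))
    (hUindep : iIndepFun U P)
    (hUunif : ∀ i, P.map (U i) = volume.restrict (Set.Ioo 0 1))
    (n : ℕ) {s : ℝ} (h0 : 0 ≤ s) (h1 : s ≤ 1) {t : ℝ} (ht : t ≤ 0) (ε : ℝ) :
    P {ω | (cnt (fun i => U i ω) n s : ℝ) ≤ ε}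
      ≤ ENNReal.ofReal (Real.exp (-t*ε) * (1 + s*(Real.exp t - 1))^n) := by
  set X := fun i => (fun x => if x ≤ s then (1:ℝ) else 0) ∘ U i with hX
  have hev : {ω | (cnt (fun i => U i ω) n s : ℝ) ≤ ε}
      = {ω | (∑ i ∈ Finset.range n, X i) ω ≤ ε} := by
    ext ω
    rw [Set.mem_setOf_eq, Set.mem_setOf_eq, cnt_eq_sum, Finset.sum_apply]
    rfl
  have hch := measure_le_le_exp_mul_mgf (μ := P) (X := ∑ i ∈ Finset.range n, X i) ε ht
    (int_exp_count P U hUmeas n s t)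
  rw [mgf_count P U hUmeas hUindep hUunif n h0 h1 t] at hch
  rw [hev]
  rw [← ENNReal.ofReal_toReal (measure_ne_top P _)]
  exact ENNReal.ofReal_le_ofReal hch

lemma tail_up (hUmeas : ∀ i, Measurable (U i))
    (hUindep : iIndepFun U P)
    (hUunif : ∀ i, P.map (U i) = volume.restrict (Set.Ioo 0 1))
    {n k : ℕ} {M : ℝ} (hM : 1 ≤ M) (hk : 1 ≤ k) (hkn : k ≤ n) :
    P {ω | (k:ℝ) ≤ (cnt (fun i => U i ω) n ((k:ℝ)/(M*(n:ℝ))) : ℝ)}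
      ≤ ENNReal.ofReal ((Real.exp 1 / M)^k) := by
  have hM0 : (0:ℝ) < M := lt_of_lt_of_le one_pos hM
  have hn : 1 ≤ n := le_trans hk hkn
  have hn0 : (0:ℝ) < n := by positivity
  have hkR : (1:ℝ) ≤ (k:ℝ) := by exact_mod_cast hk
  have hknR : (k:ℝ) ≤ (n:ℝ) := by exact_mod_cast hkn
  set s := (k:ℝ)/(M*(n:ℝ)) with hs
  have hs0 : 0 ≤ s := by positivity
  have hs1 : s ≤ 1 := by
    rw [hs, div_le_one (by positivity)]
    nlinarith
  have hlog : 0 ≤ Real.log M := Real.log_nonneg hM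
  refine le_trans (count_chernoff_ge P U hUmeas hUindep hUunif n hs0 hs1 hlog (k:ℝ)) ?_
  apply ENNReal.ofReal_le_ofReal
  rw [Real.exp_log hM0]
  have hbase : 0 ≤ 1 + s * (M - 1) := by nlinarith
  have h1x : 1 + s * (M - 1) ≤ Real.exp (s * (M - 1)) := by
    linarith [Real.add_one_le_exp (s * (M - 1))]
  have hpow : (1 + s * (M - 1))^n ≤ Real.exp ((n:ℝ) * (s * (M - 1))) := by
    rw [Real.exp_nat_mul]
    exact pow_le_pow_left₀ hbase h1x n
  have hns : (n:ℝ) * (s * (M - 1)) = (k:ℝ)/M * (M - 1) := by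
    rw [hs]; field_simp
  have hstep : Real.exp (-Real.log M * (k:ℝ)) * (1 + s * (M - 1))^n
      ≤ Real.exp (-Real.log M * (k:ℝ) + (k:ℝ)/M * (M-1)) := by
    rw [Real.exp_add]
    apply mul_le_mul_of_nonneg_left _ (le_of_lt (Real.exp_pos _))
    rw [← hns]; exact hpow
  refine le_trans hstep ?_
  have htgt : (Real.exp 1 / M)^k = Real.exp ((k:ℝ) * (1 - Real.log M)) := by
    rw [show Real.exp 1 / M = Real.exp (1 - Real.log M) by
      rw [Real.exp_sub, Real.exp_log hM0]]
    rw [← Real.exp_nat_mul]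
  rw [htgt, Real.exp_le_exp]
  have hkM : (k:ℝ)/M * (M-1) = (k:ℝ) - (k:ℝ)/M := by field_simp
  have hkMpos : 0 ≤ (k:ℝ)/M := by positivity
  nlinarith

lemma tail_lo (hUmeas : ∀ i, Measurable (U i))
    (hUindep : iIndepFun U P)
    (hUunif : ∀ i, P.map (U i) = volume.restrict (Set.Ioo 0 1))
    {n k : ℕ} {M : ℝ} (hM : 1 ≤ M) (hk : 1 ≤ k) (hkM : (k:ℝ) * M ≤ (n:ℝ)) :
    P {ω | (cnt (fun i => U i ω) n (M*(k:ℝ)/(n:ℝ)) : ℝ) ≤ (k:ℝ) - 1}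
      ≤ ENNReal.ofReal ((M * Real.exp (1 - M))^k) := by
  have hM0 : (0:ℝ) < M := lt_of_lt_of_le one_pos hM
  have hkR : (1:ℝ) ≤ (k:ℝ) := by exact_mod_cast hk
  have hn0 : (0:ℝ) < n := lt_of_lt_of_le (by nlinarith) hkM
  set s := M*(k:ℝ)/(n:ℝ) with hs
  have hs0 : 0 ≤ s := by positivity
  have hs1 : s ≤ 1 := by rw [hs, div_le_one hn0]; nlinarith
  have hlog : -Real.log M ≤ 0 := neg_nonpos.mpr (Real.log_nonneg hM)
  refine le_trans (count_chernoff_le P U hUmeas hUindep hUunif n hs0 hs1 hlog ((k:ℝ)-1)) ?_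
  apply ENNReal.ofReal_le_ofReal
  rw [Real.exp_neg, Real.exp_log hM0]
  have hinv : M⁻¹ - 1 ≥ -1 := by
    have : 0 < M⁻¹ := by positivity
    linarith
  have hbase : 0 ≤ 1 + s * (M⁻¹ - 1) := by nlinarith
  have h1x : 1 + s * (M⁻¹ - 1) ≤ Real.exp (s * (M⁻¹ - 1)) := by
    linarith [Real.add_one_le_exp (s * (M⁻¹ - 1))]
  have hpow : (1 + s * (M⁻¹ - 1))^n ≤ Real.exp ((n:ℝ) * (s * (M⁻¹ - 1))) := by
    rw [Real.exp_nat_mul]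
    exact pow_le_pow_left₀ hbase h1x n
  have hns : (n:ℝ) * (s * (M⁻¹ - 1)) = (k:ℝ) - M * (k:ℝ) := by
    rw [hs]; field_simp
  have hstep : Real.exp (-(-Real.log M) * ((k:ℝ)-1)) * (1 + s * (M⁻¹ - 1))^n
      ≤ Real.exp (Real.log M * ((k:ℝ)-1) + ((k:ℝ) - M * (k:ℝ))) := by
    rw [Real.exp_add, neg_neg]
    apply mul_le_mul_of_nonneg_left _ (le_of_lt (Real.exp_pos _))
    rw [← hns]; exact hpow
  refine le_trans hstep ?_
  have htgt : (M * Real.exp (1 - M))^k = Real.exp ((k:ℝ) * (Real.log M + (1 - M))) := by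
    rw [show M * Real.exp (1 - M) = Real.exp (Real.log M + (1 - M)) by
      rw [Real.exp_add, Real.exp_log hM0]]
    rw [← Real.exp_nat_mul]
  rw [htgt, Real.exp_le_exp]
  have hlg : 0 ≤ Real.log M := Real.log_nonneg hM
  nlinarith

lemma null_unif (hUmeas : ∀ i, Measurable (U i))
    (hUunif : ∀ i, P.map (U i) = volume.restrict (Set.Ioo 0 1)) (n : ℕ) :
    P {ω | ¬ ∀ i < n, U i ω ∈ Set.Ioo (0:ℝ) 1} = 0 := by
  have hsub : {ω | ¬ ∀ i < n, U i ω ∈ Set.Ioo (0:ℝ) 1}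
      ⊆ ⋃ i ∈ Finset.range n, U i ⁻¹' (Set.Ioo (0:ℝ) 1)ᶜ := by
    intro ω hω
    rw [Set.mem_setOf_eq] at hω
    push_neg at hω
    obtain ⟨i, hi, hmem⟩ := hω
    exact Set.mem_biUnion (Finset.mem_range.2 hi) hmem
  apply measure_mono_null hsub
  apply measure_biUnion_null_iff (Set.to_countable _) |>.2
  intro i _
  rw [← Measure.map_apply (hUmeas i) measurableSet_Ioo.compl, hUunif i,
    Measure.restrict_apply measurableSet_Ioo.compl]
  simp

lemma geom_tail {r : ℝ} (h0 : 0 ≤ r) (h2 : r ≤ 1/2) (n : ℕ) :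
    ∑ k ∈ Finset.Icc 1 n, r^k ≤ 2*r := by
  have hr1 : r < 1 := lt_of_le_of_lt h2 (by norm_num)
  rw [← Finset.Ico_add_one_right_eq_Icc, Finset.sum_Ico_eq_sum_range]
  have : ∀ i : ℕ, r^(1+i) = r * r^i := fun i => by rw [pow_add, pow_one]
  calc ∑ i ∈ Finset.range (n+1-1), r^(1+i) = r * ∑ i ∈ Finset.range (n+1-1), r^i := by
        rw [Finset.mul_sum]; exact Finset.sum_congr rfl (fun i _ => this i)
  _ ≤ r * 2 := by
      apply mul_le_mul_of_nonneg_left _ h0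
      calc ∑ i ∈ Finset.range (n+1-1), r^i
          ≤ ∑' i : ℕ, r^i := Summable.sum_le_tsum _ (fun i _ => pow_nonneg h0 i)
            (summable_geometric_of_lt_one h0 hr1)
      _ = (1-r)⁻¹ := tsum_geometric_of_lt_one h0 hr1
      _ ≤ 2 := by
          rw [inv_le_comm₀ (by linarith) (by norm_num)]
          linarith
  _ = 2*r := by ring

lemma bad_bound (hUmeas : ∀ i, Measurable (U i))
    (hUindep : iIndepFun U P)
    (hUunif : ∀ i, P.map (U i) = volume.restrict (Set.Ioo 0 1))
    {n : ℕ} (hn : 1 ≤ n) {M : ℝ} (hM : 1 ≤ M)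
    (hr1 : Real.exp 1 / M ≤ 1/2) (hr2 : M * Real.exp (1-M) ≤ 1/2) :
    P ({ω | ¬ ∀ i < n, U i ω ∈ Set.Ioo (0:ℝ) 1}
      ∪ (⋃ k ∈ Finset.Icc 1 n, {ω | (k:ℝ) ≤ (cnt (fun i => U i ω) n ((k:ℝ)/(M*(n:ℝ))) : ℝ)})
      ∪ (⋃ k ∈ Finset.Icc 1 n, {ω | (k:ℝ)*M ≤ (n:ℝ) ∧
          (cnt (fun i => U i ω) n (M*(k:ℝ)/(n:ℝ)) : ℝ) ≤ (k:ℝ)-1}))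
    ≤ ENNReal.ofReal (2*(Real.exp 1/M) + 2*(M*Real.exp (1-M))) := by
  have hr10 : 0 ≤ Real.exp 1 / M := by positivity
  have hr20 : 0 ≤ M * Real.exp (1-M) := by positivity
  have hB : P (⋃ k ∈ Finset.Icc 1 n, {ω | (k:ℝ) ≤
      (cnt (fun i => U i ω) n ((k:ℝ)/(M*(n:ℝ))) : ℝ)}) ≤ ENNReal.ofReal (2*(Real.exp 1/M)) := by
    refine le_trans (measure_biUnion_finset_le _ _) ?_
    calc ∑ k ∈ Finset.Icc 1 n, P {ω | (k:ℝ) ≤ (cnt (fun i => U i ω) n ((k:ℝ)/(M*(n:ℝ))) : ℝ)}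
        ≤ ∑ k ∈ Finset.Icc 1 n, ENNReal.ofReal ((Real.exp 1/M)^k) := by
          apply Finset.sum_le_sum
          intro k hk
          rw [Finset.mem_Icc] at hk
          exact tail_up P U hUmeas hUindep hUunif hM hk.1 hk.2
    _ = ENNReal.ofReal (∑ k ∈ Finset.Icc 1 n, (Real.exp 1/M)^k) := by
          rw [ENNReal.ofReal_sum_of_nonneg (fun k _ => pow_nonneg hr10 k)]
    _ ≤ ENNReal.ofReal (2*(Real.exp 1/M)) :=
          ENNReal.ofReal_le_ofReal (geom_tail hr10 hr1 n)
  have hC : P (⋃ k ∈ Finset.Icc 1 n, {ω | (k:ℝ)*M ≤ (n:ℝ) ∧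
      (cnt (fun i => U i ω) n (M*(k:ℝ)/(n:ℝ)) : ℝ) ≤ (k:ℝ)-1})
      ≤ ENNReal.ofReal (2*(M*Real.exp (1-M))) := by
    refine le_trans (measure_biUnion_finset_le _ _) ?_
    calc ∑ k ∈ Finset.Icc 1 n, P {ω | (k:ℝ)*M ≤ (n:ℝ) ∧
          (cnt (fun i => U i ω) n (M*(k:ℝ)/(n:ℝ)) : ℝ) ≤ (k:ℝ)-1}
        ≤ ∑ k ∈ Finset.Icc 1 n, ENNReal.ofReal ((M*Real.exp (1-M))^k) := by
          apply Finset.sum_le_sum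
          intro k hk
          rw [Finset.mem_Icc] at hk
          by_cases hc : (k:ℝ)*M ≤ (n:ℝ)
          · refine le_trans (measure_mono (fun ω hω => hω.2)) ?_
            exact tail_lo P U hUmeas hUindep hUunif hM hk.1 hc
          · have : {ω | (k:ℝ)*M ≤ (n:ℝ) ∧
                (cnt (fun i => U i ω) n (M*(k:ℝ)/(n:ℝ)) : ℝ) ≤ (k:ℝ)-1} = ∅ := by
              ext ω; simp [hc]
            rw [this]
            simp
    _ = ENNReal.ofReal (∑ k ∈ Finset.Icc 1 n, (M*Real.exp (1-M))^k) := by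
          rw [ENNReal.ofReal_sum_of_nonneg (fun k _ => pow_nonneg hr20 k)]
    _ ≤ ENNReal.ofReal (2*(M*Real.exp (1-M))) :=
          ENNReal.ofReal_le_ofReal (geom_tail hr20 hr2 n)
  calc P _ ≤ P ({ω | ¬ ∀ i < n, U i ω ∈ Set.Ioo (0:ℝ) 1}
        ∪ (⋃ k ∈ Finset.Icc 1 n, {ω | (k:ℝ) ≤
            (cnt (fun i => U i ω) n ((k:ℝ)/(M*(n:ℝ))) : ℝ)}))
      + P (⋃ k ∈ Finset.Icc 1 n, {ω | (k:ℝ)*M ≤ (n:ℝ) ∧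
            (cnt (fun i => U i ω) n (M*(k:ℝ)/(n:ℝ)) : ℝ) ≤ (k:ℝ)-1}) := measure_union_le _ _
  _ ≤ (P {ω | ¬ ∀ i < n, U i ω ∈ Set.Ioo (0:ℝ) 1}
      + P (⋃ k ∈ Finset.Icc 1 n, {ω | (k:ℝ) ≤
            (cnt (fun i => U i ω) n ((k:ℝ)/(M*(n:ℝ))) : ℝ)}))
      + P (⋃ k ∈ Finset.Icc 1 n, {ω | (k:ℝ)*M ≤ (n:ℝ) ∧
            (cnt (fun i => U i ω) n (M*(k:ℝ)/(n:ℝ)) : ℝ) ≤ (k:ℝ)-1}) :=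
        add_le_add_left (measure_union_le _ _) _
  _ ≤ (0 + ENNReal.ofReal (2*(Real.exp 1/M))) + ENNReal.ofReal (2*(M*Real.exp (1-M))) := by
        apply add_le_add (add_le_add (le_of_eq (null_unif P U hUmeas hUunif n)) hB) hC
  _ = ENNReal.ofReal (2*(Real.exp 1/M)) + ENNReal.ofReal (2*(M*Real.exp (1-M))) := by
        rw [zero_add]
  _ = ENNReal.ofReal (2*(Real.exp 1/M) + 2*(M*Real.exp (1-M))) :=
        (ENNReal.ofReal_add (by positivity) (by positivity)).symm
end prob



/-- For i.i.d. uniform-(0,1) random variables and every `0 < a < 1`, the sequences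
`sup_{a/n ≤ t ≤ 1} max(t/𝕌ₙ(t), 𝕌ₙ(t)/t)` and `sup_{a/n ≤ t ≤ 1} max(t/𝕍ₙ(t), 𝕍ₙ(t)/t)`
are `O_p(1)`. -/
theorem statement4 {Ω : Type*} [MeasurableSpace Ω] (P : Measure Ω) [IsProbabilityMeasure P]
    (U : ℕ → Ω → ℝ) (hUmeas : ∀ i, Measurable (U i))
    (hUindep : iIndepFun U P)
    (hUunif : ∀ i, P.map (U i) = volume.restrict (Set.Ioo 0 1))
    (a : ℝ) (ha0 : 0 < a) (ha1 : a < 1) :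
    IsBigOp P (fun n ω => ⨆ t : Set.Icc (a / (n : ℝ)) 1,
        max ((t : ℝ) / ecdf (fun i => U i ω) n t) (ecdf (fun i => U i ω) n t / (t : ℝ))) ∧
    IsBigOp P (fun n ω => ⨆ t : Set.Icc (a / (n : ℝ)) 1,
        max ((t : ℝ) / equant (fun i => U i ω) n t) (equant (fun i => U i ω) n t / (t : ℝ))) := by
  have main : ∀ ε : ℝ, 0 < ε → ∃ K : ℝ, 0 < K ∧
      Filter.limsup (fun n : ℕ => P {ω | K < |⨆ t : Set.Icc (a / (n : ℝ)) 1,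
        max ((t : ℝ) / ecdf (fun i => U i ω) n t) (ecdf (fun i => U i ω) n t / (t : ℝ))|}) atTop
        < ENNReal.ofReal ε ∧
      Filter.limsup (fun n : ℕ => P {ω | K < |⨆ t : Set.Icc (a / (n : ℝ)) 1,
        max ((t : ℝ) / equant (fun i => U i ω) n t) (equant (fun i => U i ω) n t / (t : ℝ))|})
        atTop < ENNReal.ofReal ε := by
    intro ε hε
    set M := max 24 (31/ε) with hMdef
    have hM24 : (24:ℝ) ≤ M := le_max_left _ _
    have hM31 : 31/ε ≤ M := le_max_right _ _
    have hM1 : (1:ℝ) ≤ M := by linarith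
    have hM0 : (0:ℝ) < M := by linarith
    have he3 : Real.exp 1 ≤ 3 := by
      have := Real.exp_one_lt_d9
      linarith
    have he0 : 0 < Real.exp 1 := Real.exp_pos 1
    have hr1 : Real.exp 1 / M ≤ 1/2 := by
      calc Real.exp 1 / M ≤ 3 / M := by gcongr
      _ ≤ 3 / 24 := by gcongr
      _ ≤ 1/2 := by norm_num
    have hexpM : M^2/4 ≤ Real.exp M := by
      have h := Real.add_one_le_exp (M/2)
      have hsq : (M/2+1)^2 ≤ (Real.exp (M/2))^2 := by
        nlinarith [Real.exp_pos (M/2)]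
      have hee : (Real.exp (M/2))^2 = Real.exp M := by
        rw [← Real.exp_nat_mul]
        norm_num
        ring_nf
      nlinarith
    have hr2' : M * Real.exp (1-M) ≤ 12/M := by
      rw [Real.exp_sub, mul_div_assoc', div_le_div_iff₀ (Real.exp_pos M) hM0]
      nlinarith [sq_nonneg M]
    have hr2 : M * Real.exp (1-M) ≤ 1/2 := by
      calc M * Real.exp (1-M) ≤ 12/M := hr2'
      _ ≤ 12/24 := by gcongr
      _ = 1/2 := by norm_num
    have htot : 2*(Real.exp 1/M) + 2*(M*Real.exp (1-M)) ≤ 30/M := by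
      have hA : Real.exp 1 / M ≤ 3/M := by gcongr
      have he : 30/M = 2*(3/M) + 2*(12/M) := by ring
      linarith
    have hlt : 30/M < ε := by
      have h31 : 0 < 31/ε := by positivity
      have hstep : 30/M ≤ 30/(31/ε) := by gcongr
      have heq : 30/(31/ε) = 30*ε/31 := by field_simp
      rw [heq] at hstep
      linarith
    set K := 2*M*(1+1/a) with hKdef
    have hK0 : 0 < K := by positivity
    have hstep : ∀ n : ℕ, 1 ≤ n →
        P {ω | K < |⨆ t : Set.Icc (a / (n : ℝ)) 1,
          max ((t : ℝ) / ecdf (fun i => U i ω) n t) (ecdf (fun i => U i ω) n t / (t : ℝ))|}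
          ≤ ENNReal.ofReal (30/M) ∧
        P {ω | K < |⨆ t : Set.Icc (a / (n : ℝ)) 1,
          max ((t : ℝ) / equant (fun i => U i ω) n t) (equant (fun i => U i ω) n t / (t : ℝ))|}
          ≤ ENNReal.ofReal (30/M) := by
      intro n hn
      set Bad := ({ω : Ω | ¬ ∀ i < n, U i ω ∈ Set.Ioo (0:ℝ) 1}
        ∪ (⋃ k ∈ Finset.Icc 1 n, {ω : Ω | (k:ℝ) ≤
            (cnt (fun i => U i ω) n ((k:ℝ)/(M*(n:ℝ))) : ℝ)})
        ∪ (⋃ k ∈ Finset.Icc 1 n, {ω : Ω | (k:ℝ)*M ≤ (n:ℝ) ∧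
            (cnt (fun i => U i ω) n (M*(k:ℝ)/(n:ℝ)) : ℝ) ≤ (k:ℝ)-1})) with hBadDef
      have hPB : P Bad ≤ ENNReal.ofReal (30/M) :=
        le_trans (bad_bound P U hUmeas hUindep hUunif hn hM1 hr1 hr2)
          (ENNReal.ofReal_le_ofReal htot)
      have hgood : ∀ ω, ω ∉ Bad →
          |⨆ t : Set.Icc (a / (n : ℝ)) 1,
            max ((t : ℝ) / ecdf (fun i => U i ω) n t)
              (ecdf (fun i => U i ω) n t / (t : ℝ))| ≤ K ∧
          |⨆ t : Set.Icc (a / (n : ℝ)) 1,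
            max ((t : ℝ) / equant (fun i => U i ω) n t)
              (equant (fun i => U i ω) n t / (t : ℝ))| ≤ K := by
        intro ω hω
        rw [hBadDef] at hω
        have hωA : ω ∉ {ω : Ω | ¬ ∀ i < n, U i ω ∈ Set.Ioo (0:ℝ) 1} :=
          fun h => hω (Or.inl (Or.inl h))
        have hωB : ω ∉ ⋃ k ∈ Finset.Icc 1 n, {ω : Ω | (k:ℝ) ≤
            (cnt (fun i => U i ω) n ((k:ℝ)/(M*(n:ℝ))) : ℝ)} :=
          fun h => hω (Or.inl (Or.inr h))
        have hωC : ω ∉ ⋃ k ∈ Finset.Icc 1 n, {ω : Ω | (k:ℝ)*M ≤ (n:ℝ) ∧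
            (cnt (fun i => U i ω) n (M*(k:ℝ)/(n:ℝ)) : ℝ) ≤ (k:ℝ)-1} :=
          fun h => hω (Or.inr h)
        have h1 : ∀ i < n, U i ω ∈ Set.Ioo (0:ℝ) 1 := by
          by_contra hc
          exact hωA hc
        have h2 : ∀ k : ℕ, 1 ≤ k → k ≤ n →
            cnt (fun i => U i ω) n ((k:ℝ)/(M*(n:ℝ))) < k := by
          intro k hk1 hkn
          by_contra hc
          push_neg at hc
          exact hωB (Set.mem_biUnion (Finset.mem_Icc.2 ⟨hk1, hkn⟩)
            (by exact_mod_cast hc))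
        have h3 : ∀ k : ℕ, 1 ≤ k → (k:ℝ)*M ≤ (n:ℝ) →
            k ≤ cnt (fun i => U i ω) n (M*(k:ℝ)/(n:ℝ)) := by
          intro k hk1 hkM
          have hkn : k ≤ n := by
            have h1k : (k:ℝ) ≤ (k:ℝ)*M := le_mul_of_one_le_right (by positivity) hM1
            exact_mod_cast le_trans h1k hkM
          by_contra hc
          push_neg at hc
          refine hωC (Set.mem_biUnion (Finset.mem_Icc.2 ⟨hk1, hkn⟩) ⟨hkM, ?_⟩)
          have : cnt (fun i => U i ω) n (M*(k:ℝ)/(n:ℝ)) + 1 ≤ k := hc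
          have hcast : ((cnt (fun i => U i ω) n (M*(k:ℝ)/(n:ℝ)) : ℝ)) + 1 ≤ (k:ℝ) := by
            exact_mod_cast this
          linarith
        exact det_bound hn hM1 ha0 ha1 h1 h2 h3
      constructor
      · refine le_trans (measure_mono ?_) hPB
        intro ω hω
        by_contra hB
        exact absurd (hgood ω hB).1 (not_le.2 hω)
      · refine le_trans (measure_mono ?_) hPB
        intro ω hω
        by_contra hB
        exact absurd (hgood ω hB).2 (not_le.2 hω)
    have hfin : ENNReal.ofReal (30/M) < ENNReal.ofReal ε :=
      (ENNReal.ofReal_lt_ofReal_iff hε).2 hlt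
    refine ⟨K, hK0, ?_, ?_⟩
    · refine lt_of_le_of_lt (Filter.limsup_le_of_le (by isBoundedDefault) ?_) hfin
      filter_upwards [eventually_ge_atTop 1] with n hn using (hstep n hn).1
    · refine lt_of_le_of_lt (Filter.limsup_le_of_le (by isBoundedDefault) ?_) hfin
      filter_upwards [eventually_ge_atTop 1] with n hn using (hstep n hn).2
  constructor
  · intro ε hε
    obtain ⟨K, hK0, h1, _⟩ := main ε hε
    exact ⟨K, hK0, h1⟩
  · intro ε hε
    obtain ⟨K, hK0, _, h2⟩ := main ε hε
    exact ⟨K, hK0, h2⟩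
end

section
/- Let F be a cumulative distribution function on [0,∞) whose tail F̄ := 1−F is regularly varying at infinity with index −1/γ₁ for some γ₁>0, i.e. for every x>0, F̄(tx)/F̄(t) → x^{−1/γ₁} as t→∞. Then (1/F̄(t)) · ∫_{(t,∞)} log(x/t) dF(x) → γ₁ as t→∞, where the integral is with respect to the Lebesgue–Stieltjes measure of F. -/
open MeasureTheory Filter Set

/-- `f` is regularly varying at infinity with index `ρ`. -/
def RegVary (f : ℝ → ℝ) (ρ : ℝ) : Prop :=
  ∀ x : ℝ, 0 < x → Tendsto (fun t => f (t * x) / f t) atTop (nhds (x ^ ρ))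

/-- If `F` is a cdf on `[0,∞)` whose tail `F̄ = 1 − F` is regularly varying at infinity with
index `−1/γ₁`, `γ₁ > 0`, then `(1/F̄(t)) ∫_{(t,∞)} log(x/t) dF(x) → γ₁` as `t → ∞`. -/
theorem statement10 (F : StieltjesFunction ℝ)
    (hF0 : ∀ z < (0 : ℝ), F z = 0)
    (hFtop : Tendsto F atTop (nhds 1))
    (hFbarpos : ∀ t : ℝ, 0 < 1 - F t)
    (γ₁ : ℝ) (hγ₁ : 0 < γ₁)
    (hRV : RegVary (fun t => 1 - F t) (-1 / γ₁)) :
    Tendsto (fun t => (∫ x in Set.Ioi t, Real.log (x / t) ∂F.measure) / (1 - F t))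
      atTop (nhds γ₁) := by
  have hFm : Monotone F := F.mono
  have hF0' : ∀ x : ℝ, 0 ≤ F x := by
    intro x
    rcases lt_or_ge x 0 with h | h
    · exact (hF0 x h).ge
    · have h1 := hF0 (-1) (by norm_num)
      calc (0:ℝ) = F (-1) := h1.symm
        _ ≤ F x := hFm (by linarith)
  have hFbot : Tendsto F atBot (nhds 0) := by
    apply Tendsto.congr' _ (tendsto_const_nhds (x := (0:ℝ)))
    filter_upwards [eventually_le_atBot (-1 : ℝ)] with z hz
    exact (hF0 z (by linarith)).symm
  -- measure of right tails
  have hIoi : ∀ x : ℝ, F.measure (Ioi x) = ENNReal.ofReal (1 - F x) := by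
    intro x
    have h1 : F.measure (Iic x) = ENNReal.ofReal (F x) := by
      simpa using F.measure_Iic hFbot x
    have h2 : F.measure univ = ENNReal.ofReal 1 := by
      simpa using F.measure_univ hFbot hFtop
    have h3 : F.measure (Ioi x) = F.measure univ - F.measure (Iic x) := by
      rw [← compl_Iic]
      exact measure_compl measurableSet_Iic (by rw [h1]; exact ENNReal.ofReal_ne_top)
    rw [h3, h1, h2, ← ENNReal.ofReal_sub 1 (hF0' x)]
  -- set up the geometric bound constants
  set ρ : ℝ := (2:ℝ) ^ (-1/γ₁) with hρdef
  have hexpneg : (-1/γ₁ : ℝ) < 0 := div_neg_of_neg_of_pos (by norm_num) hγ₁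
  have hρ0 : 0 < ρ := Real.rpow_pos_of_pos two_pos _
  have hρ1 : ρ < 1 := Real.rpow_lt_one_of_one_lt_of_neg one_lt_two hexpneg
  set σ : ℝ := (ρ + 1) / 2 with hσdef
  have hσ0 : 0 < σ := by rw [hσdef]; linarith
  have hσ1 : σ < 1 := by rw [hσdef]; linarith
  have hρσ : ρ < σ := by rw [hσdef]; linarith
  have hlogσ : Real.log σ < 0 := Real.log_neg hσ0 hσ1
  have hlog2 : 0 < Real.log 2 := Real.log_pos one_lt_two
  set c : ℝ := Real.log σ / Real.log 2 with hcdef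
  have hc : c < 0 := div_neg_of_neg_of_pos hlogσ hlog2
  -- eventual one-step contraction
  have hev : ∀ᶠ t in atTop, (1 - F (t * 2)) / (1 - F t) ≤ σ :=
    (hRV 2 two_pos).eventually (eventually_le_nhds hρσ)
  obtain ⟨T, hT⟩ := eventually_atTop.mp hev
  set T₀ : ℝ := max T 1 with hT₀def
  have hT₀1 : (1:ℝ) ≤ T₀ := le_max_right _ _
  have hstep : ∀ t : ℝ, T₀ ≤ t → 1 - F (t * 2) ≤ σ * (1 - F t) := by
    intro t ht
    have := hT t (le_trans (le_max_left _ _) ht)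
    rwa [div_le_iff₀ (hFbarpos t)] at this
  have hiter : ∀ n : ℕ, ∀ t : ℝ, T₀ ≤ t → 1 - F (t * 2 ^ n) ≤ σ ^ n * (1 - F t) := by
    intro n
    induction n with
    | zero => intro t _; simp
    | succ n ih =>
      intro t ht
      have ht1 : (1:ℝ) ≤ t := le_trans hT₀1 ht
      have h1 : T₀ ≤ t * 2 ^ n := by
        have : (1:ℝ) ≤ 2 ^ n := one_le_pow₀ (by norm_num)
        nlinarith
      have h2 := hstep (t * 2 ^ n) h1
      have h3 := ih t ht
      have h4 : t * 2 ^ (n + 1) = t * 2 ^ n * 2 := by ring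
      rw [h4]
      calc 1 - F (t * 2 ^ n * 2) ≤ σ * (1 - F (t * 2 ^ n)) := h2
        _ ≤ σ * (σ ^ n * (1 - F t)) := by
            exact mul_le_mul_of_nonneg_left h3 hσ0.le
        _ = σ ^ (n + 1) * (1 - F t) := by ring
  -- the dominating function
  set bound : ℝ → ℝ := fun s => σ⁻¹ * Real.exp (c * s) with hbounddef
  have hbound_int : IntegrableOn bound (Ioi 0) := by
    have h := (exp_neg_integrableOn_Ioi (0:ℝ) (show (0:ℝ) < -c by linarith)).const_mul σ⁻¹
    simpa [hbounddef, neg_neg, IntegrableOn] using h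
  have hσexp : ∀ n : ℕ, σ ^ n = Real.exp ((n:ℝ) * Real.log σ) := by
    intro n
    rw [Real.exp_nat_mul, Real.exp_log hσ0]
  -- key pointwise domination
  have hkey : ∀ t : ℝ, T₀ ≤ t → ∀ s : ℝ, 0 < s →
      1 - F (t * Real.exp s) ≤ bound s * (1 - F t) := by
    intro t ht s hs
    have ht0 : (0:ℝ) < t := lt_of_lt_of_le one_pos (le_trans hT₀1 ht)
    set n := ⌊s / Real.log 2⌋₊ with hn
    have h1 : (n:ℝ) ≤ s / Real.log 2 := Nat.floor_le (by positivity)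
    have h2 : s / Real.log 2 < n + 1 := Nat.lt_floor_add_one _
    have hexp : (2:ℝ) ^ n ≤ Real.exp s := by
      have h3 : (n:ℝ) * Real.log 2 ≤ s := by
        rw [← le_div_iff₀ hlog2]; exact h1
      calc (2:ℝ) ^ n = Real.exp ((n:ℝ) * Real.log 2) := by
            rw [Real.exp_nat_mul, Real.exp_log two_pos]
        _ ≤ Real.exp s := Real.exp_le_exp.mpr h3
    have hmono : 1 - F (t * Real.exp s) ≤ 1 - F (t * 2 ^ n) :=
      sub_le_sub_left (hFm (mul_le_mul_of_nonneg_left hexp ht0.le)) 1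
    have h3 := hiter n t ht
    have hσn : σ ^ n ≤ bound s := by
      have e2 : bound s = Real.exp (c * s - Real.log σ) := by
        rw [Real.exp_sub, Real.exp_log hσ0, hbounddef]
        ring
      rw [hσexp n, e2]
      apply Real.exp_le_exp.mpr
      have h4 : (s / Real.log 2 - 1) * Real.log σ = c * s - Real.log σ := by
        rw [hcdef]; field_simp
      have h5 : (n:ℝ) * Real.log σ ≤ (s / Real.log 2 - 1) * Real.log σ :=
        mul_le_mul_of_nonpos_right (by linarith) hlogσ.le
      linarith [h4 ▸ h5]
    calc 1 - F (t * Real.exp s) ≤ 1 - F (t * 2 ^ n) := hmono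
      _ ≤ σ ^ n * (1 - F t) := h3
      _ ≤ bound s * (1 - F t) := mul_le_mul_of_nonneg_right hσn (hFbarpos t).le
  -- layer cake identity for t ≥ T₀
  have hId : ∀ t : ℝ, T₀ ≤ t →
      (∫ x in Ioi t, Real.log (x / t) ∂F.measure)
        = ∫ s in Ioi 0, (1 - F (t * Real.exp s)) := by
    intro t ht
    have ht0 : (0:ℝ) < t := lt_of_lt_of_le one_pos (le_trans hT₀1 ht)
    have hnn : 0 ≤ᵐ[F.measure.restrict (Ioi t)] fun x => Real.log (x / t) := by
      have h : ∀ᵐ x ∂F.measure.restrict (Ioi t), 0 ≤ Real.log (x / t) := by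
        rw [ae_restrict_iff' measurableSet_Ioi]
        filter_upwards with x hx
        exact Real.log_nonneg ((one_le_div ht0).mpr hx.le)
      filter_upwards [h] with x hx using hx
    have hmble : Measurable fun x : ℝ => Real.log (x / t) :=
      Real.measurable_log.comp (measurable_id.div_const t)
    have hsetEq : ∀ s : ℝ, 0 < s →
        {a : ℝ | s < Real.log (a / t)} ∩ Ioi t = Ioi (t * Real.exp s) := by
      intro s hs
      ext a
      simp only [mem_inter_iff, mem_setOf_eq, mem_Ioi]
      constructor
      · rintro ⟨h1, h2⟩
        have ha : 0 < a / t := div_pos (ht0.trans h2) ht0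
        have := (Real.lt_log_iff_exp_lt ha).mp h1
        rw [lt_div_iff₀ ht0] at this
        linarith [this]
      · intro h
        have hes : 1 < Real.exp s := by nlinarith [Real.add_one_le_exp s]
        have h2 : t < a := lt_of_lt_of_le (lt_mul_of_one_lt_right ht0 hes) h.le
        refine ⟨?_, h2⟩
        rw [Real.lt_log_iff_exp_lt (div_pos (ht0.trans h2) ht0)]
        rw [lt_div_iff₀ ht0]
        linarith
    have hmeasIoi : ∀ s : ℝ, 0 < s →
        (F.measure.restrict (Ioi t)) {a : ℝ | s < Real.log (a / t)}
          = ENNReal.ofReal (1 - F (t * Real.exp s)) := by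
      intro s hs
      rw [Measure.restrict_apply (measurableSet_lt measurable_const hmble), hsetEq s hs,
        hIoi]
    have hint : Integrable (fun x => Real.log (x / t)) (F.measure.restrict (Ioi t)) := by
      refine ⟨hmble.aestronglyMeasurable, ?_⟩
      rw [hasFiniteIntegral_iff_ofReal hnn,
        lintegral_eq_lintegral_meas_lt _ hnn hmble.aemeasurable]
      have hb : ∫⁻ s in Ioi 0, ENNReal.ofReal (bound s * (1 - F t)) < ⊤ :=
        (hbound_int.mul_const _).lintegral_lt_top
      refine lt_of_le_of_lt (lintegral_mono_ae ?_) hb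
      rw [ae_restrict_iff' measurableSet_Ioi]
      filter_upwards with s hs
      rw [hmeasIoi s hs]
      exact ENNReal.ofReal_le_ofReal (hkey t ht s hs)
    rw [hint.integral_eq_integral_meas_lt hnn]
    refine setIntegral_congr_fun measurableSet_Ioi fun s hs => ?_
    rw [measureReal_def, hmeasIoi s hs, ENNReal.toReal_ofReal (hFbarpos _).le]
  -- dominated convergence
  have hmain : Tendsto (fun t => ∫ s in Ioi 0, (1 - F (t * Real.exp s)) / (1 - F t))
      atTop (nhds γ₁) := by
    have hlim : (∫ s in Ioi 0, Real.exp (-(γ₁⁻¹ * s))) = γ₁ := by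
      have h := integral_comp_mul_left_Ioi (fun u => Real.exp (-u)) 0 (inv_pos.mpr hγ₁)
      simp only [mul_zero, smul_eq_mul, inv_inv] at h
      rw [h, integral_exp_neg_Ioi_zero, mul_one]
    have hdct := tendsto_integral_filter_of_dominated_convergence
      (μ := (volume : Measure ℝ).restrict (Ioi 0))
      (F := fun t s => (1 - F (t * Real.exp s)) / (1 - F t))
      (f := fun s => Real.exp (-(γ₁⁻¹ * s))) (l := atTop) bound
      ?_ ?_ hbound_int ?_
    · rwa [hlim] at hdct
    · filter_upwards with t
      exact (((measurable_const.sub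
        (hFm.measurable.comp (Real.measurable_exp.const_mul t))).div_const
          (1 - F t)).aestronglyMeasurable).restrict
    · filter_upwards [eventually_ge_atTop T₀] with t ht
      rw [ae_restrict_iff' measurableSet_Ioi]
      filter_upwards with s hs
      have hnum : 0 ≤ (1 - F (t * Real.exp s)) / (1 - F t) :=
        div_nonneg (hFbarpos _).le (hFbarpos _).le
      rw [Real.norm_eq_abs, abs_of_nonneg hnum, div_le_iff₀ (hFbarpos t)]
      exact hkey t ht s hs
    · filter_upwards with s
      have h := hRV (Real.exp s) (Real.exp_pos s)
      have he : (Real.exp s) ^ (-1/γ₁) = Real.exp (-(γ₁⁻¹ * s)) := by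
        rw [Real.rpow_def_of_pos (Real.exp_pos s), Real.log_exp]
        congr 1
        field_simp
      rwa [he] at h
  refine hmain.congr' ?_
  filter_upwards [eventually_ge_atTop T₀] with t ht
  rw [hId t ht, integral_div]
end

section
/- Let n ≥ 1, 1 ≤ k < n, let 0 < z₁ ≤ z₂ ≤ … ≤ zₙ be positive reals and d₁,…,dₙ ∈ {0,1}. Then (1/n)·Σ_{i=n−k+1}^n d_i · log(z_i/z_{n−k}) · exp( Σ_{j=1}^i (1−d_j)/(n−j+1) ) / ∏_{j=1}^{n−k} exp( −d_j/(n−j+1) ) = Σ_{i=1}^k a_i · log(z_{n−i+1}/z_{n−k}), where a_i := n^{−1} · d_{n−i+1} · ( ∏_{j=i}^n e^{1/j} ) · ( ∏_{j=i}^k e^{−d_{n−j+1}/j} ). -/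
lemma refl_sum (n a b : ℕ) (ha : 1 ≤ a) (hb : b ≤ n) (f : ℕ → ℝ) :
    ∑ j ∈ Finset.Icc a b, f j = ∑ j ∈ Finset.Icc (n+1-b) (n+1-a), f (n+1-j) := by
  apply Finset.sum_nbij' (fun j => n+1-j) (fun j => n+1-j) <;>
    simp only [Finset.mem_Icc] <;> intros <;> first | omega | (congr 1; omega)

/-- The algebraic identity bringing the Nelson–Aalen-based Hill-type estimator into an
explicit weighted-sum form.  Here `z i` plays the role of the ordered observation `Z_{i:n}`
(indices `1,…,n`) and `d i` the role of the concomitant censoring indicator `δ_{[i:n]}`. -/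
theorem statement12 (n k : ℕ) (hn : 1 ≤ k) (hkn : k < n)
    (z d : ℕ → ℝ) (hzpos : ∀ i, 1 ≤ i → i ≤ n → 0 < z i)
    (hzmono : ∀ i j, 1 ≤ i → i ≤ j → j ≤ n → z i ≤ z j)
    (hd : ∀ j, d j = 0 ∨ d j = 1) :
    (1 / (n : ℝ)) *
      (∑ i ∈ Finset.Icc (n - k + 1) n,
          d i * Real.log (z i / z (n - k))
            * Real.exp (∑ j ∈ Finset.Icc 1 i, (1 - d j) / ((n : ℝ) - (j : ℝ) + 1)))
      / (∏ j ∈ Finset.Icc 1 (n - k), Real.exp (-(d j) / ((n : ℝ) - (j : ℝ) + 1)))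
    = ∑ i ∈ Finset.Icc 1 k,
        ((1 / (n : ℝ)) * d (n - i + 1)
            * (∏ j ∈ Finset.Icc i n, Real.exp (1 / (j : ℝ)))
            * (∏ j ∈ Finset.Icc i k, Real.exp (-(d (n - j + 1)) / (j : ℝ))))
          * Real.log (z (n - i + 1) / z (n - k)) := by
  rw [← Real.exp_sum, div_eq_mul_inv, ← Real.exp_neg, Finset.mul_sum, Finset.sum_mul]
  refine Finset.sum_nbij' (fun a => n+1-a) (fun i => n+1-i) ?_ ?_ ?_ ?_ ?_
  · simp only [Finset.mem_Icc]; omega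
  · simp only [Finset.mem_Icc]; omega
  · simp only [Finset.mem_Icc]; omega
  · simp only [Finset.mem_Icc]; omega
  · intro a ha
    simp only [Finset.mem_Icc] at ha
    have e1 : n - (n+1-a) + 1 = a := by omega
    rw [e1, ← Real.exp_sum, ← Real.exp_sum]
    beta_reduce
    have key : (∑ j ∈ Finset.Icc 1 a, (1 - d j) / ((n : ℝ) - (j : ℝ) + 1)) +
        -∑ j ∈ Finset.Icc 1 (n-k), (-(d j)) / ((n : ℝ) - (j : ℝ) + 1)
        = (∑ j ∈ Finset.Icc (n+1-a) n, 1 / (j : ℝ)) +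
          ∑ j ∈ Finset.Icc (n+1-a) k, (-(d (n - j + 1))) / (j : ℝ) := by
      have split : ∑ j ∈ Finset.Icc 1 a, (1 - d j) / ((n : ℝ) - (j : ℝ) + 1)
          = (∑ j ∈ Finset.Icc 1 a, 1 / ((n : ℝ) - (j : ℝ) + 1))
            - ∑ j ∈ Finset.Icc 1 a, d j / ((n : ℝ) - (j : ℝ) + 1) := by
        rw [← Finset.sum_sub_distrib]
        exact Finset.sum_congr rfl fun j _ => by ring
      rw [split]
      have r1 : ∑ j ∈ Finset.Icc 1 a, 1 / ((n : ℝ) - (j : ℝ) + 1)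
          = ∑ j ∈ Finset.Icc (n+1-a) n, 1 / (j : ℝ) := by
        rw [refl_sum n (n+1-a) n (by omega) le_rfl (fun j => 1 / (j:ℝ)),
          show n+1-n = 1 by omega, show n+1-(n+1-a) = a by omega]
        refine Finset.sum_congr rfl fun j hj => ?_
        simp only [Finset.mem_Icc] at hj
        have : ((n+1-j : ℕ) : ℝ) = (n:ℝ) - j + 1 := by
          have h : j ≤ n + 1 := by omega
          push_cast [Nat.cast_sub h]; ring
        rw [this]
      -- split Icc 1 a = Icc 1 (n-k) ∪ Icc (n-k+1) a
      have split2 : ∑ j ∈ Finset.Icc 1 a, d j / ((n : ℝ) - (j : ℝ) + 1)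
          = (∑ j ∈ Finset.Icc 1 (n-k), d j / ((n : ℝ) - (j : ℝ) + 1))
            + ∑ j ∈ Finset.Icc (n-k+1) a, d j / ((n : ℝ) - (j : ℝ) + 1) := by
        rw [← Finset.sum_union]
        · congr 1
          ext x
          simp only [Finset.mem_Icc, Finset.mem_union]
          omega
        · rw [Finset.disjoint_left]
          simp only [Finset.mem_Icc]; omega
      have r2 : ∑ j ∈ Finset.Icc (n-k+1) a, d j / ((n : ℝ) - (j : ℝ) + 1)
          = ∑ j ∈ Finset.Icc (n+1-a) k, d (n - j + 1) / (j : ℝ) := by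
        rw [refl_sum n (n+1-a) k (by omega) (by omega) (fun j => d (n - j + 1) / (j:ℝ)),
          show n+1-k = n-k+1 by omega, show n+1-(n+1-a) = a by omega]
        refine Finset.sum_congr rfl fun j hj => ?_
        simp only [Finset.mem_Icc] at hj
        have e3 : n - (n+1-j) + 1 = j := by omega
        rw [e3]
        have c1 : ((n+1-j : ℕ) : ℝ) = (n:ℝ) - j + 1 := by
          have h : j ≤ n + 1 := by omega
          push_cast [Nat.cast_sub h]; ring
        rw [c1]
      rw [split2, r1, r2]
      simp only [neg_div, Finset.sum_neg_distrib]
      ring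
    rw [mul_assoc (1/(n:ℝ) * d a), ← Real.exp_add,
      mul_assoc (1/(n:ℝ)), mul_assoc (d a * Real.log (z a / z (n-k))), ← Real.exp_add, key]
    ring
end

section
/- Assume F̄ and Ḡ are regularly varying at infinity with respective indices −1/γ₁ and −1/γ₂, γ₁,γ₂>0, and set γ := γ₁γ₂/(γ₁+γ₂), p := γ/γ₁, H̄ := F̄·Ḡ and H̄⁽¹⁾(z) := ∫_{(z,∞)} Ḡ dF. Then lim_{z→∞} sup_{w ≥ 1} | H̄⁽¹⁾(zw)/H̄(z) − p·w^{−1/γ} | = 0. -/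
open MeasureTheory Filter Set

noncomputable def Ifun (F G : StieltjesFunction ℝ) (t : ℝ) : ℝ :=
  ∫ y in Ioi t, (1 - G y) ∂F.measure

noncomputable def Rfun (F G : StieltjesFunction ℝ) (t : ℝ) : ℝ :=
  Ifun F G t / ((1 - F t) * (1 - G t))

lemma meas_Ioi' (F : StieltjesFunction ℝ) (hFcont : Continuous F)
    (hFtop : Tendsto F atTop (nhds 1)) (x : ℝ) :
    F.measure (Ioi x) = ENNReal.ofReal (1 - F x) := by
  have hleft : Function.leftLim (F : ℝ → ℝ) x = F x :=
    leftLim_eq_of_tendsto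
      ((hFcont.tendsto x).mono_left nhdsWithin_le_nhds)
  have h2 : F.measure {x} = 0 := by
    rw [F.measure_singleton, hleft, sub_self, ENNReal.ofReal_zero]
  rw [← Ici_sdiff_left, measure_diff_null h2, F.measure_Ici hFtop x, hleft]

lemma integrableGb (F G : StieltjesFunction ℝ) (hGcont : Continuous G)
    (hF0 : ∀ z < (0 : ℝ), F z = 0) (hFtop : Tendsto F atTop (nhds 1))
    (hG0 : ∀ z < (0 : ℝ), G z = 0) (hGbarpos : ∀ t : ℝ, 0 < 1 - G t) :
    Integrable (fun y => 1 - G y) F.measure := by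
  have hFbot : Tendsto F atBot (nhds 0) := by
    have hev : (F : ℝ → ℝ) =ᶠ[atBot] fun _ => (0 : ℝ) := by
      filter_upwards [eventually_lt_atBot (0 : ℝ)] with z hz using hF0 z hz
    exact Tendsto.congr' hev.symm tendsto_const_nhds
  haveI : IsProbabilityMeasure F.measure := F.isProbabilityMeasure hFbot hFtop
  have hGnn : ∀ y : ℝ, 0 ≤ G y := by
    intro y
    rcases lt_or_ge y 0 with h | h
    · rw [hG0 y h]
    · have h1 : G (-1) = 0 := hG0 (-1) (by norm_num)
      calc (0:ℝ) = G (-1) := h1.symm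
        _ ≤ G y := G.mono (by linarith)
  refine (integrable_const (1:ℝ)).mono'
    ((continuous_const.sub hGcont).aestronglyMeasurable) ?_
  refine Filter.Eventually.of_forall fun y => ?_
  rw [Real.norm_eq_abs, abs_of_pos (hGbarpos y)]
  linarith [hGnn y]

lemma alg_ratio (i i' a a' b b' J : ℝ) (ha : 0 < a) (hb : 0 < b) (ha' : 0 < a') (hb' : 0 < b')
    (hsplit : i = J + i') (hJub : J ≤ b * (a - a')) (hJlb : b' * (a - a') ≤ J) :
    (i / (a * b) ≤ (1 - a' / a) + (i' / (a' * b')) * ((a' / a) * (b' / b))) ∧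
    ((b' / b) * (1 - a' / a) + (i' / (a' * b')) * ((a' / a) * (b' / b)) ≤ i / (a * b)) := by
  have h1 : (1 - a' / a) + (i' / (a' * b')) * ((a' / a) * (b' / b))
      = (b * (a - a') + i') / (a * b) := by
    field_simp
  have h2 : (b' / b) * (1 - a' / a) + (i' / (a' * b')) * ((a' / a) * (b' / b))
      = (b' * (a - a') + i') / (a * b) := by
    field_simp
  constructor
  · rw [h1]
    exact (div_le_div_iff_of_pos_right (mul_pos ha hb)).mpr (by linarith)
  · rw [h2]
    exact (div_le_div_iff_of_pos_right (mul_pos ha hb)).mpr (by linarith)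

lemma aux_slope_ratio (c₁ c₂ : ℝ) (hc₂ : c₂ ≠ 0) :
    Tendsto (fun r : ℝ => (1 - r ^ c₁) / (1 - r ^ c₂)) (nhdsWithin 1 (Ioi 1))
      (nhds (c₁ / c₂)) := by
  have h₁ : HasDerivAt (fun x : ℝ => x ^ c₁) c₁ 1 := by
    simpa using Real.hasDerivAt_rpow_const (x := 1) (p := c₁) (Or.inl one_ne_zero)
  have h₂ : HasDerivAt (fun x : ℝ => x ^ c₂) c₂ 1 := by
    simpa using Real.hasDerivAt_rpow_const (x := 1) (p := c₂) (Or.inl one_ne_zero)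
  rw [hasDerivAt_iff_tendsto_slope] at h₁ h₂
  have hdiv := h₁.div h₂ hc₂
  have hmono : nhdsWithin (1:ℝ) (Ioi 1) ≤ nhdsWithin 1 {(1:ℝ)}ᶜ :=
    nhdsWithin_mono _ (fun x hx => ne_of_gt hx)
  refine Tendsto.congr' ?_ (hdiv.mono_left hmono)
  filter_upwards [self_mem_nhdsWithin] with r hr
  have hr1 : (1:ℝ) < r := hr
  have hd : r - 1 ≠ 0 := sub_ne_zero.mpr (ne_of_gt hr1)
  show slope (fun x : ℝ => x ^ c₁) 1 r / slope (fun x : ℝ => x ^ c₂) 1 r = _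
  rw [slope_def_field, slope_def_field, Real.one_rpow, Real.one_rpow]
  rcases eq_or_ne (r ^ c₂) 1 with h | h
  · simp [h]
  · have h2 : r ^ c₂ - 1 ≠ 0 := sub_ne_zero.mpr h
    have h3 : 1 - r ^ c₂ ≠ 0 := sub_ne_zero.mpr (Ne.symm h)
    field_simp
    ring


lemma arith_upper (u v R' A x y ε : ℝ) (hu0 : 0 ≤ u) (hu1 : u ≤ 1) (hv0 : 0 ≤ v) (hv1 : v ≤ 1)
    (hR0 : 0 ≤ R') (hA0 : 0 ≤ A) (hA1 : A ≤ 1) (hx0 : 0 ≤ x) (hx1 : x ≤ 1)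
    (hy0 : 0 ≤ y) (hy1 : y ≤ 1) (hε : 0 ≤ ε)
    (hux : x - ε ≤ u) (huv : u ≤ x + ε) (hvy : v ≤ y + ε) (hRA : R' ≤ A + ε) :
    (1 - u) + R' * (u * v) ≤ (1 - x) + A * (x * y) + 5 * ε := by
  have h1 : 0 ≤ (A + ε - R') * (u * v) := mul_nonneg (by linarith) (mul_nonneg hu0 hv0)
  have h2 : 0 ≤ (x + ε - u) * (A * v) := mul_nonneg (by linarith) (mul_nonneg hA0 hv0)
  have h3 : 0 ≤ (y + ε - v) * (A * x) := mul_nonneg (by linarith) (mul_nonneg hA0 hx0)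
  have h4 : u * v ≤ 1 := mul_le_one₀ hu1 hv0 hv1
  have h5 : A * v ≤ 1 := mul_le_one₀ hA1 hv0 hv1
  have h6 : A * x ≤ 1 := mul_le_one₀ hA1 hx0 hx1
  nlinarith [mul_nonneg hε (sub_nonneg.mpr h4), mul_nonneg hε (sub_nonneg.mpr h5),
    mul_nonneg hε (sub_nonneg.mpr h6)]

lemma arith_lower (u v R' B x y ε : ℝ) (hu0 : 0 ≤ u) (hu1 : u ≤ 1) (hv0 : 0 ≤ v) (hv1 : v ≤ 1)
    (hR0 : 0 ≤ R') (hB0 : 0 ≤ B) (hB1 : B ≤ 1) (hx0 : 0 ≤ x) (hx1 : x ≤ 1)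
    (hy0 : 0 ≤ y) (hy1 : y ≤ 1) (hε : 0 ≤ ε)
    (hux : x - ε ≤ u) (huv : u ≤ x + ε) (hvy : y - ε ≤ v) (hRB : B - ε ≤ R') :
    y * (1 - x) + B * (x * y) - 5 * ε ≤ v * (1 - u) + R' * (u * v) := by
  have h1 : 0 ≤ (R' - B + ε) * (u * v) := mul_nonneg (by linarith) (mul_nonneg hu0 hv0)
  have h2 : 0 ≤ (u - x + ε) * (B * v) := mul_nonneg (by linarith) (mul_nonneg hB0 hv0)
  have h3 : 0 ≤ (v - y + ε) * (B * x) := mul_nonneg (by linarith) (mul_nonneg hB0 hx0)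
  have h4 : 0 ≤ (v - y + ε) * (1 - u) := mul_nonneg (by linarith) (by linarith)
  have h5 : 0 ≤ (x + ε - u) * y := mul_nonneg (by linarith) hy0
  have h6 : u * v ≤ 1 := mul_le_one₀ hu1 hv0 hv1
  have h7 : B * v ≤ 1 := mul_le_one₀ hB1 hv0 hv1
  have h8 : B * x ≤ 1 := mul_le_one₀ hB1 hx0 hx1
  nlinarith [mul_nonneg hε (sub_nonneg.mpr h6), mul_nonneg hε (sub_nonneg.mpr h7),
    mul_nonneg hε (sub_nonneg.mpr h8), mul_nonneg hε hu0, mul_nonneg hε hy0]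

lemma keyR (F G : StieltjesFunction ℝ)
    (hFcont : Continuous F) (hGcont : Continuous G)
    (hF0 : ∀ z < (0 : ℝ), F z = 0) (hG0 : ∀ z < (0 : ℝ), G z = 0)
    (hFtop : Tendsto F atTop (nhds 1))
    (hFbarpos : ∀ t : ℝ, 0 < 1 - F t) (hGbarpos : ∀ t : ℝ, 0 < 1 - G t)
    (γ₁ γ₂ : ℝ) (hγ₁ : 0 < γ₁) (hγ₂ : 0 < γ₂)
    (hRVF : RegVary (fun t => 1 - F t) (-1 / γ₁))
    (hRVG : RegVary (fun t => 1 - G t) (-1 / γ₂))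
    (γ p : ℝ) (hγ : γ = γ₁ * γ₂ / (γ₁ + γ₂)) (hp : p = γ / γ₁) :
    Tendsto (Rfun F G) atTop (nhds p) := by
  have hint : ∀ s : Set ℝ, IntegrableOn (fun y => 1 - G y) s F.measure :=
    fun s => (integrableGb F G hGcont hF0 hFtop hG0 hGbarpos).integrableOn
  have hmeas : ∀ x : ℝ, F.measure (Ioi x) = ENNReal.ofReal (1 - F x) :=
    meas_Ioi' F hFcont hFtop
  have hden : ∀ t : ℝ, 0 < (1 - F t) * (1 - G t) :=
    fun t => mul_pos (hFbarpos t) (hGbarpos t)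
  have hnn : ∀ b : ℝ, 0 ≤ Ifun F G b :=
    fun b => setIntegral_nonneg measurableSet_Ioi fun y _ => (hGbarpos y).le
  have htail : ∀ b : ℝ, Ifun F G b ≤ (1 - F b) * (1 - G b) := by
    intro b
    have h1 : Ifun F G b ≤ ∫ _ in Ioi b, (1 - G b) ∂F.measure := by
      refine setIntegral_mono_on (hint _) ?_ measurableSet_Ioi ?_
      · exact (integrableOn_const_iff (by finiteness)).mpr (Or.inr (by rw [hmeas b]; exact ENNReal.ofReal_lt_top))
      · intro y hy
        have := G.mono (le_of_lt hy)
        linarith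
    rwa [setIntegral_const, measureReal_def, hmeas, ENNReal.toReal_ofReal (hFbarpos b).le, smul_eq_mul] at h1
  have hR0 : ∀ t, 0 ≤ Rfun F G t := fun t => div_nonneg (hnn t) (hden t).le
  have hR1 : ∀ t, Rfun F G t ≤ 1 := fun t => by
    simp only [Rfun]
    rw [div_le_one (hden t)]; exact htail t
  have hbddA : IsBoundedUnder (· ≤ ·) atTop (Rfun F G) := isBoundedUnder_of ⟨1, hR1⟩
  have hbddB : IsBoundedUnder (· ≥ ·) atTop (Rfun F G) := isBoundedUnder_of ⟨0, hR0⟩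
  have hcobA : IsCoboundedUnder (· ≤ ·) atTop (Rfun F G) := hbddB.isCoboundedUnder_le
  have hcobB : IsCoboundedUnder (· ≥ ·) atTop (Rfun F G) := hbddA.isCoboundedUnder_ge
  set A := limsup (Rfun F G) atTop with hA
  set B := liminf (Rfun F G) atTop with hB
  have hB0 : 0 ≤ B := le_liminf_of_le hcobB (Eventually.of_forall hR0)
  have hA1 : A ≤ 1 := limsup_le_of_le hcobA (Eventually.of_forall hR1)
  have hBA : B ≤ A := liminf_le_limsup hbddA hbddB
  have hA0 : 0 ≤ A := le_trans hB0 hBA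
  have hB1 : B ≤ 1 := le_trans hBA hA1
  have hγpos : 0 < γ := by rw [hγ]; positivity
  have hsum : -1 / γ₁ + -1 / γ₂ = -1 / γ := by
    rw [hγ]
    field_simp
    ring
  have hexpγ : -1 / γ < 0 := div_neg_of_neg_of_pos (by norm_num) hγpos
  have hexp1 : -1 / γ₁ < 0 := div_neg_of_neg_of_pos (by norm_num) hγ₁
  have hexp2 : -1 / γ₂ < 0 := div_neg_of_neg_of_pos (by norm_num) hγ₂
  -- the key recursion inequalities, for every r > 1
  have hkey : ∀ r : ℝ, 1 < r →
      A * (1 - r ^ (-1 / γ)) ≤ 1 - r ^ (-1 / γ₁) ∧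
      r ^ (-1 / γ₂) * (1 - r ^ (-1 / γ₁)) ≤ B * (1 - r ^ (-1 / γ)) := by
    intro r hr
    have hr0 : (0 : ℝ) < r := lt_trans one_pos hr
    have hx0 : 0 < r ^ (-1 / γ₁) := Real.rpow_pos_of_pos hr0 _
    have hx1 : r ^ (-1 / γ₁) < 1 := Real.rpow_lt_one_of_one_lt_of_neg hr hexp1
    have hy0 : 0 < r ^ (-1 / γ₂) := Real.rpow_pos_of_pos hr0 _
    have hy1 : r ^ (-1 / γ₂) < 1 := Real.rpow_lt_one_of_one_lt_of_neg hr hexp2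
    have hxy : r ^ (-1 / γ₁) * r ^ (-1 / γ₂) = r ^ (-1 / γ) := by
      rw [← Real.rpow_add hr0, hsum]
    have hu : Tendsto (fun t => (1 - F (t * r)) / (1 - F t)) atTop (nhds (r ^ (-1 / γ₁))) :=
      hRVF r hr0
    have hv : Tendsto (fun t => (1 - G (t * r)) / (1 - G t)) atTop (nhds (r ^ (-1 / γ₂))) :=
      hRVG r hr0
    -- pointwise recursion between R t and R (t*r)
    have hrec : ∀ t : ℝ, 0 ≤ t →
        (Rfun F G t ≤ (1 - (1 - F (t * r)) / (1 - F t)) +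
            Rfun F G (t * r) * (((1 - F (t * r)) / (1 - F t)) * ((1 - G (t * r)) / (1 - G t))) ∧
         ((1 - G (t * r)) / (1 - G t)) * (1 - (1 - F (t * r)) / (1 - F t)) +
            Rfun F G (t * r) * (((1 - F (t * r)) / (1 - F t)) * ((1 - G (t * r)) / (1 - G t)))
              ≤ Rfun F G t) := by
      intro t ht
      have htr : t ≤ t * r := le_mul_of_one_le_right ht hr.le
      have hsplit : Ifun F G t
          = (∫ y in Ioc t (t * r), (1 - G y) ∂F.measure) + Ifun F G (t * r) := by
        have hdisj : Disjoint (Ioc t (t * r)) (Ioi (t * r)) := by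
          rw [Set.disjoint_left]
          rintro z ⟨_, hz2⟩ hz'
          exact absurd hz2 (not_le.mpr hz')
        have hun := setIntegral_union (μ := F.measure) (f := fun y => 1 - G y) hdisj
          measurableSet_Ioi (hint _) (hint _)
        rw [Ioc_union_Ioi_eq_Ioi htr] at hun
        simpa only [Ifun] using hun
      have hmIoc : (F.measure (Ioc t (t * r))).toReal = F (t * r) - F t := by
        rw [F.measure_Ioc, ENNReal.toReal_ofReal (sub_nonneg.mpr (F.mono htr))]
      have hJub : (∫ y in Ioc t (t * r), (1 - G y) ∂F.measure)
          ≤ (1 - G t) * ((1 - F t) - (1 - F (t * r))) := by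
        have h1 : (∫ y in Ioc t (t * r), (1 - G y) ∂F.measure)
            ≤ ∫ _ in Ioc t (t * r), (1 - G t) ∂F.measure := by
          refine setIntegral_mono_on (hint _) ?_ measurableSet_Ioc ?_
          · exact (integrableOn_const_iff (by finiteness)).mpr (Or.inr (by
              rw [F.measure_Ioc]; exact ENNReal.ofReal_lt_top))
          · intro y hy
            have := G.mono (le_of_lt hy.1)
            linarith
        rw [setIntegral_const, measureReal_def, hmIoc, smul_eq_mul] at h1
        calc (∫ y in Ioc t (t * r), (1 - G y) ∂F.measure)
            ≤ (F (t * r) - F t) * (1 - G t) := h1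
          _ = (1 - G t) * ((1 - F t) - (1 - F (t * r))) := by ring
      have hJlb : (1 - G (t * r)) * ((1 - F t) - (1 - F (t * r)))
          ≤ ∫ y in Ioc t (t * r), (1 - G y) ∂F.measure := by
        have h1 : (∫ _ in Ioc t (t * r), (1 - G (t * r)) ∂F.measure)
            ≤ ∫ y in Ioc t (t * r), (1 - G y) ∂F.measure := by
          refine setIntegral_mono_on ?_ (hint _) measurableSet_Ioc ?_
          · exact (integrableOn_const_iff (by finiteness)).mpr (Or.inr (by
              rw [F.measure_Ioc]; exact ENNReal.ofReal_lt_top))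
          · intro y hy
            have := G.mono hy.2
            linarith
        rw [setIntegral_const, measureReal_def, hmIoc, smul_eq_mul] at h1
        calc (1 - G (t * r)) * ((1 - F t) - (1 - F (t * r)))
            = (F (t * r) - F t) * (1 - G (t * r)) := by ring
          _ ≤ _ := h1
      exact alg_ratio (Ifun F G t) (Ifun F G (t * r)) (1 - F t) (1 - F (t * r))
        (1 - G t) (1 - G (t * r)) _ (hFbarpos t) (hGbarpos t) (hFbarpos (t * r))
        (hGbarpos (t * r)) hsplit hJub hJlb
    -- bounds on the ratio functions
    have hu01 : ∀ t : ℝ, 0 ≤ t → 0 ≤ (1 - F (t * r)) / (1 - F t) ∧ (1 - F (t * r)) / (1 - F t) ≤ 1 := by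
      intro t ht
      have htr : t ≤ t * r := le_mul_of_one_le_right ht hr.le
      constructor
      · exact div_nonneg (hFbarpos (t * r)).le (hFbarpos t).le
      · rw [div_le_one (hFbarpos t)]
        have := F.mono htr
        linarith
    have hv01 : ∀ t : ℝ, 0 ≤ t → 0 ≤ (1 - G (t * r)) / (1 - G t) ∧ (1 - G (t * r)) / (1 - G t) ≤ 1 := by
      intro t ht
      have htr : t ≤ t * r := le_mul_of_one_le_right ht hr.le
      constructor
      · exact div_nonneg (hGbarpos (t * r)).le (hGbarpos t).le
      · rw [div_le_one (hGbarpos t)]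
        have := G.mono htr
        linarith
    have hmulr : Tendsto (fun t : ℝ => t * r) atTop atTop :=
      Tendsto.atTop_mul_const hr0 tendsto_id
    -- upper step
    have hstepA : ∀ ε : ℝ, 0 < ε → A ≤ (1 - r ^ (-1 / γ₁)) + A * (r ^ (-1 / γ₁) * r ^ (-1 / γ₂)) + 5 * ε := by
      intro ε hε
      refine limsup_le_of_le hcobA ?_
      have h1 : ∀ᶠ t in atTop, |(1 - F (t * r)) / (1 - F t) - r ^ (-1 / γ₁)| < ε := by
        have := Metric.tendsto_nhds.mp hu ε hε
        filter_upwards [this] with t ht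
        rwa [Real.dist_eq] at ht
      have h2 : ∀ᶠ t in atTop, |(1 - G (t * r)) / (1 - G t) - r ^ (-1 / γ₂)| < ε := by
        have := Metric.tendsto_nhds.mp hv ε hε
        filter_upwards [this] with t ht
        rwa [Real.dist_eq] at ht
      have h3 : ∀ᶠ t in atTop, Rfun F G (t * r) < A + ε := by
        have hs : ∀ᶠ s in atTop, Rfun F G s < A + ε :=
          eventually_lt_of_limsup_lt (by linarith) hbddA
        exact hmulr.eventually hs
      filter_upwards [h1, h2, h3, eventually_ge_atTop (0 : ℝ)] with t ht1 ht2 ht3 ht4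
      have hrec1 := (hrec t ht4).1
      obtain ⟨hab1, hab2⟩ := abs_lt.mp ht1
      obtain ⟨hbb1, hbb2⟩ := abs_lt.mp ht2
      refine le_trans hrec1 ?_
      exact arith_upper _ _ _ A _ _ ε (hu01 t ht4).1 (hu01 t ht4).2 (hv01 t ht4).1 (hv01 t ht4).2
        (hR0 _) hA0 hA1 hx0.le hx1.le hy0.le hy1.le hε.le
        (by linarith) (by linarith) (by linarith) ht3.le
    -- lower step
    have hstepB : ∀ ε : ℝ, 0 < ε →
        r ^ (-1 / γ₂) * (1 - r ^ (-1 / γ₁)) + B * (r ^ (-1 / γ₁) * r ^ (-1 / γ₂)) - 5 * ε ≤ B := by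
      intro ε hε
      refine le_liminf_of_le hcobB ?_
      have h1 : ∀ᶠ t in atTop, |(1 - F (t * r)) / (1 - F t) - r ^ (-1 / γ₁)| < ε := by
        have := Metric.tendsto_nhds.mp hu ε hε
        filter_upwards [this] with t ht
        rwa [Real.dist_eq] at ht
      have h2 : ∀ᶠ t in atTop, |(1 - G (t * r)) / (1 - G t) - r ^ (-1 / γ₂)| < ε := by
        have := Metric.tendsto_nhds.mp hv ε hε
        filter_upwards [this] with t ht
        rwa [Real.dist_eq] at ht
      have h3 : ∀ᶠ t in atTop, B - ε < Rfun F G (t * r) := by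
        have hs : ∀ᶠ s in atTop, B - ε < Rfun F G s :=
          eventually_lt_of_lt_liminf (by linarith) hbddB
        exact hmulr.eventually hs
      filter_upwards [h1, h2, h3, eventually_ge_atTop (0 : ℝ)] with t ht1 ht2 ht3 ht4
      have hrec2 := (hrec t ht4).2
      obtain ⟨hab1, hab2⟩ := abs_lt.mp ht1
      obtain ⟨hbb1, hbb2⟩ := abs_lt.mp ht2
      refine le_trans ?_ hrec2
      exact arith_lower _ _ _ B _ _ ε (hu01 t ht4).1 (hu01 t ht4).2 (hv01 t ht4).1 (hv01 t ht4).2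
        (hR0 _) hB0 hB1 hx0.le hx1.le hy0.le hy1.le hε.le
        (by linarith) (by linarith) (by linarith) ht3.le
    constructor
    · have hev : ∀ᶠ ε in nhdsWithin (0 : ℝ) (Ioi 0),
          A ≤ (1 - r ^ (-1 / γ₁)) + A * (r ^ (-1 / γ₁) * r ^ (-1 / γ₂)) + 5 * ε := by
        filter_upwards [self_mem_nhdsWithin] with ε hε using hstepA ε hε
      have hct : Tendsto (fun ε : ℝ => (1 - r ^ (-1 / γ₁)) + A * (r ^ (-1 / γ₁) * r ^ (-1 / γ₂)) + 5 * ε)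
          (nhdsWithin (0 : ℝ) (Ioi 0))
          (nhds ((1 - r ^ (-1 / γ₁)) + A * (r ^ (-1 / γ₁) * r ^ (-1 / γ₂)) + 5 * 0)) :=
        ((continuous_const.add (continuous_const.mul continuous_id)).tendsto 0).mono_left
          nhdsWithin_le_nhds
      have := ge_of_tendsto hct hev
      rw [← hxy]
      nlinarith [this]
    · have hev : ∀ᶠ ε in nhdsWithin (0 : ℝ) (Ioi 0),
          r ^ (-1 / γ₂) * (1 - r ^ (-1 / γ₁)) + B * (r ^ (-1 / γ₁) * r ^ (-1 / γ₂)) - 5 * ε ≤ B := by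
        filter_upwards [self_mem_nhdsWithin] with ε hε using hstepB ε hε
      have hct : Tendsto (fun ε : ℝ =>
          r ^ (-1 / γ₂) * (1 - r ^ (-1 / γ₁)) + B * (r ^ (-1 / γ₁) * r ^ (-1 / γ₂)) - 5 * ε)
          (nhdsWithin (0 : ℝ) (Ioi 0))
          (nhds (r ^ (-1 / γ₂) * (1 - r ^ (-1 / γ₁)) + B * (r ^ (-1 / γ₁) * r ^ (-1 / γ₂)) - 5 * 0)) :=
        ((continuous_const.sub (continuous_const.mul continuous_id)).tendsto 0).mono_left
          nhdsWithin_le_nhds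
      have := le_of_tendsto hct hev
      rw [← hxy]
      nlinarith [this]
  -- pass to the limit r → 1⁺
  have hc2 : -1 / γ ≠ 0 := ne_of_lt hexpγ
  have hratio : Tendsto (fun r : ℝ => (1 - r ^ (-1 / γ₁)) / (1 - r ^ (-1 / γ)))
      (nhdsWithin 1 (Ioi 1)) (nhds ((-1 / γ₁) / (-1 / γ))) := aux_slope_ratio _ _ hc2
  have hval : (-1 / γ₁) / (-1 / γ) = p := by
    rw [hp]
    field_simp
  have hAp : A ≤ p := by
    rw [← hval]
    refine ge_of_tendsto hratio ?_
    filter_upwards [self_mem_nhdsWithin] with r hr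
    have hr1 : (1 : ℝ) < r := hr
    have h1c : 0 < 1 - r ^ (-1 / γ) := by
      have := Real.rpow_lt_one_of_one_lt_of_neg hr1 hexpγ
      linarith
    rw [le_div_iff₀ h1c]
    exact (hkey r hr1).1
  have h1' : Tendsto (fun r : ℝ => r ^ (-1 / γ₂)) (nhdsWithin 1 (Ioi 1)) (nhds 1) := by
    have := ((Real.continuousAt_rpow_const 1 (-1 / γ₂) (Or.inl one_ne_zero)).tendsto).mono_left
      (nhdsWithin_le_nhds (a := (1:ℝ)) (s := Ioi 1))
    simpa using this
  have h2tend : Tendsto (fun r : ℝ => r ^ (-1 / γ₂) * ((1 - r ^ (-1 / γ₁)) / (1 - r ^ (-1 / γ))))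
      (nhdsWithin 1 (Ioi 1)) (nhds (1 * ((-1 / γ₁) / (-1 / γ)))) := h1'.mul hratio
  have hpB : p ≤ B := by
    have hev : ∀ᶠ r in nhdsWithin (1:ℝ) (Ioi 1),
        r ^ (-1 / γ₂) * ((1 - r ^ (-1 / γ₁)) / (1 - r ^ (-1 / γ))) ≤ B := by
      filter_upwards [self_mem_nhdsWithin] with r hr
      have hr1 : (1 : ℝ) < r := hr
      have h1c : 0 < 1 - r ^ (-1 / γ) := by
        have := Real.rpow_lt_one_of_one_lt_of_neg hr1 hexpγ
        linarith
      rw [← mul_div_assoc, div_le_iff₀ h1c]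
      exact (hkey r hr1).2
    have := le_of_tendsto h2tend hev
    rwa [one_mul, hval] at this
  exact tendsto_of_le_liminf_of_limsup_le hpB hAp hbddA hbddB
lemma keyPoint (F G : StieltjesFunction ℝ)
    (hFcont : Continuous F) (hGcont : Continuous G)
    (hF0 : ∀ z < (0 : ℝ), F z = 0) (hG0 : ∀ z < (0 : ℝ), G z = 0)
    (hFtop : Tendsto F atTop (nhds 1))
    (hFbarpos : ∀ t : ℝ, 0 < 1 - F t) (hGbarpos : ∀ t : ℝ, 0 < 1 - G t)
    (γ₁ γ₂ : ℝ) (hγ₁ : 0 < γ₁) (hγ₂ : 0 < γ₂)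
    (hRVF : RegVary (fun t => 1 - F t) (-1 / γ₁))
    (hRVG : RegVary (fun t => 1 - G t) (-1 / γ₂))
    (γ p : ℝ) (hγ : γ = γ₁ * γ₂ / (γ₁ + γ₂)) (hp : p = γ / γ₁)
    (w : ℝ) (hw : 1 ≤ w) :
    Tendsto (fun z => Ifun F G (z * w) / ((1 - F z) * (1 - G z))) atTop
      (nhds (p * w ^ (-1 / γ))) := by
  have hw0 : (0 : ℝ) < w := lt_of_lt_of_le one_pos hw
  have hsum : -1 / γ₁ + -1 / γ₂ = -1 / γ := by
    rw [hγ]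
    field_simp
    ring
  have hkey := keyR F G hFcont hGcont hF0 hG0 hFtop hFbarpos hGbarpos γ₁ γ₂ hγ₁ hγ₂
    hRVF hRVG γ p hγ hp
  have hmul : Tendsto (fun z : ℝ => z * w) atTop atTop :=
    Tendsto.atTop_mul_const hw0 tendsto_id
  have h1 : Tendsto (fun z => Rfun F G (z * w)) atTop (nhds p) := hkey.comp hmul
  have h2 : Tendsto (fun z => (1 - F (z * w)) / (1 - F z)) atTop (nhds (w ^ (-1 / γ₁))) :=
    hRVF w hw0
  have h3 : Tendsto (fun z => (1 - G (z * w)) / (1 - G z)) atTop (nhds (w ^ (-1 / γ₂))) :=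
    hRVG w hw0
  have hlim := (h1.mul h2).mul h3
  have hval : p * w ^ (-1 / γ₁) * w ^ (-1 / γ₂) = p * w ^ (-1 / γ) := by
    rw [mul_assoc, ← Real.rpow_add hw0, hsum]
  rw [← hval]
  refine hlim.congr fun z => ?_
  simp only [Rfun, Ifun]
  have ha := (hFbarpos z).ne'
  have hb := (hGbarpos z).ne'
  have ha' := (hFbarpos (z * w)).ne'
  have hb' := (hGbarpos (z * w)).ne'
  field_simp

/-- If `F̄` and `Ḡ` are regularly varying at infinity with indices `−1/γ₁` and `−1/γ₂`, then
with `H̄ = F̄Ḡ`, `H̄⁽¹⁾(z) = ∫_{(z,∞)} Ḡ dF`, `γ = γ₁γ₂/(γ₁+γ₂)` and `p = γ/γ₁`, one has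
`lim_{z→∞} sup_{w ≥ 1} |H̄⁽¹⁾(zw)/H̄(z) − p·w^{−1/γ}| = 0`. -/
theorem statement14 (F G : StieltjesFunction ℝ)
    (hFcont : Continuous F) (hGcont : Continuous G)
    (hF0 : ∀ z < (0 : ℝ), F z = 0) (hG0 : ∀ z < (0 : ℝ), G z = 0)
    (hFtop : Tendsto F atTop (nhds 1)) (hGtop : Tendsto G atTop (nhds 1))
    (hFbarpos : ∀ t : ℝ, 0 < 1 - F t) (hGbarpos : ∀ t : ℝ, 0 < 1 - G t)
    (γ₁ γ₂ : ℝ) (hγ₁ : 0 < γ₁) (hγ₂ : 0 < γ₂)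
    (hRVF : RegVary (fun t => 1 - F t) (-1 / γ₁))
    (hRVG : RegVary (fun t => 1 - G t) (-1 / γ₂))
    (γ p : ℝ) (hγ : γ = γ₁ * γ₂ / (γ₁ + γ₂)) (hp : p = γ / γ₁) :
    Tendsto
      (fun z => ⨆ w : {w : ℝ // 1 ≤ w},
        |(∫ y in Set.Ioi (z * (w : ℝ)), (1 - G y) ∂F.measure)
            / ((1 - F z) * (1 - G z))
          - p * (w : ℝ) ^ (-1 / γ)|)
      atTop (nhds 0) := by
  haveI : Nonempty {w : ℝ // 1 ≤ w} := ⟨⟨1, le_rfl⟩⟩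
  have hγpos : 0 < γ := by rw [hγ]; positivity
  have hppos : 0 < p := by rw [hp, hγ]; positivity
  have hp1 : p ≤ 1 := by
    rw [hp, hγ, div_le_one hγ₁, div_le_iff₀ (by linarith : (0:ℝ) < γ₁ + γ₂)]
    nlinarith
  have hexpγ : -1 / γ < 0 := div_neg_of_neg_of_pos (by norm_num) hγpos
  have hint : ∀ s : Set ℝ, IntegrableOn (fun y => 1 - G y) s F.measure :=
    fun s => (integrableGb F G hGcont hF0 hFtop hG0 hGbarpos).integrableOn
  have hden : ∀ t : ℝ, 0 < (1 - F t) * (1 - G t) :=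
    fun t => mul_pos (hFbarpos t) (hGbarpos t)
  have hnn : ∀ b : ℝ, 0 ≤ Ifun F G b :=
    fun b => setIntegral_nonneg measurableSet_Ioi fun y _ => (hGbarpos y).le
  have hIanti : ∀ a b : ℝ, a ≤ b → Ifun F G b ≤ Ifun F G a := by
    intro a b hab
    simp only [Ifun]
    exact setIntegral_mono_set (hint _) (Eventually.of_forall fun y => (hGbarpos y).le)
      ((Ioi_subset_Ioi hab).eventuallyLE)
  have hpoint : ∀ w : ℝ, 1 ≤ w →
      Tendsto (fun z => Ifun F G (z * w) / ((1 - F z) * (1 - G z))) atTop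
        (nhds (p * w ^ (-1 / γ))) :=
    fun w hw => keyPoint F G hFcont hGcont hF0 hG0 hFtop hFbarpos hGbarpos γ₁ γ₂ hγ₁ hγ₂
      hRVF hRVG γ p hγ hp w hw
  rw [NormedAddCommGroup.tendsto_nhds_zero]
  intro ε hε
  -- choose a geometric grid ratio ρ close to 1
  have hcont1 : Tendsto (fun ρ : ℝ => ρ ^ (-1 / γ)) (nhdsWithin 1 (Ioi 1)) (nhds 1) := by
    have := ((Real.continuousAt_rpow_const 1 (-1 / γ) (Or.inl one_ne_zero)).tendsto).mono_left
      (nhdsWithin_le_nhds (a := (1:ℝ)) (s := Ioi 1))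
    simpa using this
  have hev1 : ∀ᶠ ρ in nhdsWithin (1:ℝ) (Ioi 1), 1 - ε/8 < ρ ^ (-1 / γ) :=
    hcont1.eventually (eventually_gt_nhds (by linarith))
  obtain ⟨ρ, hρgap, hρ1⟩ := (hev1.and self_mem_nhdsWithin).exists
  have hρ1' : (1 : ℝ) < ρ := hρ1
  have hρ0 : (0 : ℝ) < ρ := lt_trans one_pos hρ1'
  have ha0 : 0 < ρ ^ (-1 / γ) := Real.rpow_pos_of_pos hρ0 _
  have ha1 : ρ ^ (-1 / γ) < 1 := Real.rpow_lt_one_of_one_lt_of_neg hρ1' hexpγ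
  -- choose N with (ρ^(-1/γ))^N < ε/8
  obtain ⟨N, hN⟩ : ∃ N : ℕ, (ρ ^ (-1 / γ)) ^ N < ε/8 := by
    have := (tendsto_pow_atTop_nhds_zero_of_lt_one ha0.le ha1).eventually
      (eventually_lt_nhds (by linarith : (0:ℝ) < ε/8))
    exact this.exists
  have hwk : ∀ k : ℕ, (1 : ℝ) ≤ ρ ^ k := fun k => one_le_pow₀ hρ1'.le
  have hvalk : ∀ k : ℕ, ((ρ : ℝ) ^ k) ^ (-1 / γ) = (ρ ^ (-1 / γ)) ^ k := by
    intro k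
    rw [← Real.rpow_natCast ρ k, ← Real.rpow_mul hρ0.le, mul_comm, Real.rpow_mul hρ0.le,
      Real.rpow_natCast]
  have hgrid : ∀ k : ℕ, Tendsto (fun z => Ifun F G (z * ρ ^ k) / ((1 - F z) * (1 - G z)))
      atTop (nhds (p * (ρ ^ (-1 / γ)) ^ k)) := by
    intro k
    have := hpoint (ρ ^ k) (hwk k)
    rwa [hvalk k] at this
  have hev2 : ∀ᶠ z in atTop, ∀ k ∈ Set.Iic N,
      |Ifun F G (z * ρ ^ k) / ((1 - F z) * (1 - G z)) - p * (ρ ^ (-1 / γ)) ^ k| ≤ ε/8 := by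
    rw [eventually_all_finite (Set.finite_Iic N)]
    intro k _
    have := Metric.tendsto_nhds.mp (hgrid k) (ε/8) (by linarith)
    filter_upwards [this] with z hz
    rw [Real.dist_eq] at hz
    exact hz.le
  filter_upwards [hev2, eventually_ge_atTop (1:ℝ)] with z hz hz1
  have hz0 : (0 : ℝ) < z := lt_of_lt_of_le one_pos hz1
  have hΦanti : ∀ w w' : ℝ, w ≤ w' →
      Ifun F G (z * w') / ((1 - F z) * (1 - G z)) ≤ Ifun F G (z * w) / ((1 - F z) * (1 - G z)) :=
    fun w w' h => (div_le_div_iff_of_pos_right (hden z)).mpr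
      (hIanti _ _ (mul_le_mul_of_nonneg_left h hz0.le))
  have hΦ0 : ∀ w : ℝ, 0 ≤ Ifun F G (z * w) / ((1 - F z) * (1 - G z)) :=
    fun w => div_nonneg (hnn _) (hden z).le
  have hψanti : ∀ w w' : ℝ, 0 < w → w ≤ w' → p * w' ^ (-1 / γ) ≤ p * w ^ (-1 / γ) :=
    fun w w' hw hww => mul_le_mul_of_nonneg_left
      (Real.rpow_le_rpow_of_nonpos hw hww hexpγ.le) hppos.le
  have hψ0 : ∀ w : ℝ, 0 < w → 0 ≤ p * w ^ (-1 / γ) :=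
    fun w hw => mul_nonneg hppos.le (Real.rpow_pos_of_pos hw _).le
  have hak1 : ∀ k : ℕ, (ρ ^ (-1 / γ)) ^ k ≤ 1 := fun k => pow_le_one₀ ha0.le ha1.le
  have claim : ∀ k : ℕ, k ≤ N → ∀ w : ℝ, 1 ≤ w → w ≤ ρ ^ k →
      |Ifun F G (z * w) / ((1 - F z) * (1 - G z)) - p * w ^ (-1 / γ)| ≤ ε/2 := by
    intro k
    induction k with
    | zero =>
      intro _ w hw1 hw2
      have hw : w = 1 := le_antisymm (by simpa using hw2) hw1
      subst hw
      have h := hz 0 (Set.mem_Iic.mpr (Nat.zero_le N))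
      simp only [pow_zero, mul_one, Real.one_rpow] at h ⊢
      linarith
    | succ k ih =>
      intro hkN w hw1 hw2
      rcases le_or_gt w (ρ ^ k) with h | h
      · exact ih (Nat.le_of_succ_le hkN) w hw1 h
      · have hk' : k ≤ N := Nat.le_of_succ_le hkN
        have h1 := hz k (Set.mem_Iic.mpr hk')
        have h2 := hz (k+1) (Set.mem_Iic.mpr hkN)
        obtain ⟨h1a, h1b⟩ := abs_le.mp h1
        obtain ⟨h2a, h2b⟩ := abs_le.mp h2
        have hup := hΦanti (ρ ^ k) w h.le
        have hdn := hΦanti w (ρ ^ (k+1)) hw2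
        have hψw_ge : p * ((ρ : ℝ) ^ (k+1)) ^ (-1 / γ) ≤ p * w ^ (-1 / γ) :=
          hψanti w _ (lt_of_lt_of_le one_pos hw1) hw2
        have hψw_le : p * w ^ (-1 / γ) ≤ p * ((ρ : ℝ) ^ k) ^ (-1 / γ) :=
          hψanti _ w (pow_pos hρ0 k) h.le
        rw [hvalk] at hψw_ge hψw_le
        have hgap : p * (ρ ^ (-1 / γ)) ^ k - p * (ρ ^ (-1 / γ)) ^ (k+1) ≤ ε/8 := by
          have heq : p * (ρ ^ (-1 / γ)) ^ k - p * (ρ ^ (-1 / γ)) ^ (k+1)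
              = (p * (ρ ^ (-1 / γ)) ^ k) * (1 - ρ ^ (-1 / γ)) := by ring
          rw [heq]
          have hpk : p * (ρ ^ (-1 / γ)) ^ k ≤ 1 := by
            calc p * (ρ ^ (-1 / γ)) ^ k ≤ 1 * 1 :=
              mul_le_mul hp1 (hak1 k) (pow_pos ha0 k).le one_pos.le
            _ = 1 := mul_one 1
          have hpk0 : 0 ≤ p * (ρ ^ (-1 / γ)) ^ k :=
            mul_nonneg hppos.le (pow_pos ha0 k).le
          calc (p * (ρ ^ (-1 / γ)) ^ k) * (1 - ρ ^ (-1 / γ)) ≤ 1 * (1 - ρ ^ (-1 / γ)) :=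
              mul_le_mul_of_nonneg_right hpk (by linarith)
            _ = 1 - ρ ^ (-1 / γ) := one_mul _
            _ ≤ ε/8 := by linarith
        rw [abs_le]
        constructor
        · linarith
        · linarith
  have hbound : ∀ w : ℝ, 1 ≤ w →
      |Ifun F G (z * w) / ((1 - F z) * (1 - G z)) - p * w ^ (-1 / γ)| ≤ ε/2 := by
    intro w hw1
    rcases le_or_gt w (ρ ^ N) with h | h
    · exact claim N le_rfl w hw1 h
    · have hup := hΦanti (ρ ^ N) w h.le
      have h1 := hz N (Set.mem_Iic.mpr le_rfl)
      obtain ⟨h1a, h1b⟩ := abs_le.mp h1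
      have hψw_le : p * w ^ (-1 / γ) ≤ p * ((ρ : ℝ) ^ N) ^ (-1 / γ) :=
        hψanti _ w (pow_pos hρ0 N) h.le
      rw [hvalk] at hψw_le
      have hψ0w := hψ0 w (lt_of_lt_of_le one_pos hw1)
      have hpaN : p * (ρ ^ (-1 / γ)) ^ N ≤ ε/8 := by
        calc p * (ρ ^ (-1 / γ)) ^ N ≤ 1 * (ρ ^ (-1 / γ)) ^ N :=
            mul_le_mul_of_nonneg_right hp1 (pow_pos ha0 N).le
          _ = (ρ ^ (-1 / γ)) ^ N := one_mul _
          _ ≤ ε/8 := hN.le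
      rw [abs_le]
      refine ⟨by linarith [hΦ0 w], by linarith [hΦ0 (ρ ^ N)]⟩
  -- now bound the supremum
  have hbdd : BddAbove (Set.range fun w : {w : ℝ // 1 ≤ w} =>
      |Ifun F G (z * (w : ℝ)) / ((1 - F z) * (1 - G z)) - p * (w : ℝ) ^ (-1 / γ)|) := by
    refine ⟨ε/2, ?_⟩
    rintro x ⟨w, rfl⟩
    exact hbound w w.2
  have hsup_le : (⨆ w : {w : ℝ // 1 ≤ w},
      |Ifun F G (z * (w : ℝ)) / ((1 - F z) * (1 - G z)) - p * (w : ℝ) ^ (-1 / γ)|) ≤ ε/2 :=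
    ciSup_le fun w => hbound w w.2
  have h0le : 0 ≤ ⨆ w : {w : ℝ // 1 ≤ w},
      |Ifun F G (z * (w : ℝ)) / ((1 - F z) * (1 - G z)) - p * (w : ℝ) ^ (-1 / γ)| :=
    le_trans (abs_nonneg _) (le_ciSup hbdd ⟨1, le_rfl⟩)
  show ‖⨆ w : {w : ℝ // 1 ≤ w},
      |Ifun F G (z * (w : ℝ)) / ((1 - F z) * (1 - G z)) - p * (w : ℝ) ^ (-1 / γ)|‖ < ε
  rw [Real.norm_eq_abs, abs_of_nonneg h0le]
  linarith
end
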